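/- arXiv:1809.06947 — 7 statements merged into one kernel-verified Lean document; each statement's English description precedes it below -/
import Mathlib

section
/- Let p be prime and k ≥ 1. For all n ≥ 0 and all i with 0 ≤ i ≤ p − 1, we have ℓ_{p,k}((pn + i)!) ≡ ℓ_{p,k}(n!) · (pn + i)_p! (mod p^k), where (pn+i)_p! is the Gauss factorial, i.e., the product of all m ≤ pn+i coprime to p. -/
def lastDigits (b k m : ℕ) : ℕ := (m / b ^ padicValNat b m) % b ^ k

def gaussFac (c n : ℕ) : ℕ := ∏ m ∈ (Finset.Icc 1 n).filter (fun m => Nat.Coprime c m), m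

lemma gaussFac_coprime (p n : ℕ) : Nat.Coprime p (gaussFac p n) :=
  Nat.Coprime.prod_right fun m hm => (Finset.mem_filter.mp hm).2

lemma fac_split (p : ℕ) (hp : p.Prime) (n i : ℕ) (hi : i < p) :
    Nat.factorial (p * n + i) = p ^ n * Nat.factorial n * gaussFac p (p * n + i) := by
  have hfilt : (Finset.Icc 1 (p * n + i)).filter (fun m => p ∣ m)
      = (Finset.Icc 1 n).image (fun j => p * j) := by
    ext m
    simp only [Finset.mem_filter, Finset.mem_Icc, Finset.mem_image]
    constructor
    · rintro ⟨⟨h1, h2⟩, j, rfl⟩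
      refine ⟨j, ⟨?_, ?_⟩, rfl⟩
      · rcases Nat.eq_zero_or_pos j with rfl | h
        · simp at h1
        · exact h
      · have : p * j < p * (n + 1) := by
          calc p * j ≤ p * n + i := h2
          _ < p * (n + 1) := by rw [Nat.mul_add, Nat.mul_one]; omega
        exact Nat.lt_succ_iff.mp ((Nat.mul_lt_mul_left hp.pos).mp this)
    · rintro ⟨j, ⟨h1, h2⟩, rfl⟩
      refine ⟨⟨?_, ?_⟩, ⟨j, rfl⟩⟩
      · calc 1 = 1 * 1 := rfl
        _ ≤ p * j := Nat.mul_le_mul hp.pos h1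
      · have : p * j ≤ p * n := Nat.mul_le_mul_left p h2
        omega
  have hfac : Nat.factorial (p * n + i) = ∏ m ∈ Finset.Icc 1 (p * n + i), m := by
    rw [← Finset.Ico_add_one_right_eq_Icc, Finset.prod_Ico_id_eq_factorial]
  rw [hfac, ← Finset.prod_filter_mul_prod_filter_not (Finset.Icc 1 (p * n + i)) (fun m => p ∣ m)]
  have hnot : (Finset.Icc 1 (p * n + i)).filter (fun m => ¬ p ∣ m)
      = (Finset.Icc 1 (p * n + i)).filter (fun m => Nat.Coprime p m) := by
    apply Finset.filter_congr
    intro m _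
    simp [hp.coprime_iff_not_dvd]
  rw [hnot, hfilt, Finset.prod_image (fun a _ b _ h => Nat.eq_of_mul_eq_mul_left hp.pos h)]
  have : ∏ j ∈ Finset.Icc 1 n, p * j = p ^ n * Nat.factorial n := by
    rw [Finset.prod_mul_distrib, Finset.prod_const, Nat.card_Icc,
      ← Finset.Ico_add_one_right_eq_Icc, Finset.prod_Ico_id_eq_factorial]
    norm_num
  rw [this]
  rfl

theorem stmt_2 (p k : ℕ) (hp : p.Prime) (hk : 1 ≤ k) (n i : ℕ) (hi : i ≤ p - 1) :
    lastDigits p k (Nat.factorial (p * n + i)) ≡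
      lastDigits p k (Nat.factorial n) * gaussFac p (p * n + i) [MOD p ^ k] := by
  haveI : Fact p.Prime := ⟨hp⟩
  have hip : i < p := by have := hp.pos; omega
  have hsplit := fac_split p hp n i hip
  set G := gaussFac p (p * n + i) with hG
  have hGpos : 0 < G := Finset.prod_pos fun m hm => by
    have := (Finset.mem_filter.mp hm).1
    have := (Finset.mem_Icc.mp this).1
    omega
  have hfacpos := Nat.factorial_pos n
  set ν := padicValNat p (Nat.factorial n) with hν
  have hdvd : p ^ ν ∣ Nat.factorial n := pow_padicValNat_dvd
  obtain ⟨q, hq⟩ := hdvd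
  have hppos : 0 < p ^ ν := pow_pos hp.pos ν
  have hqpos : 0 < q := by
    rcases Nat.eq_zero_or_pos q with rfl | h
    · rw [Nat.mul_zero] at hq; omega
    · exact h
  have hqcop : ¬ p ∣ q := by
    intro ⟨c, hc⟩
    have : p ^ (ν + 1) ∣ Nat.factorial n := ⟨c, by rw [hq, hc]; ring⟩
    exact pow_succ_padicValNat_not_dvd hfacpos.ne' this
  have hval : padicValNat p (Nat.factorial (p * n + i)) = n + ν := by
    rw [hsplit, hq]
    rw [padicValNat.mul (Nat.mul_pos (pow_pos hp.pos n) (Nat.mul_pos hppos hqpos)).ne' hGpos.ne',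
      padicValNat.mul (pow_pos hp.pos n).ne' (Nat.mul_pos hppos hqpos).ne',
      padicValNat.prime_pow,
      padicValNat.eq_zero_of_not_dvd (hp.coprime_iff_not_dvd.mp (gaussFac_coprime p _)),
      padicValNat.mul hppos.ne' hqpos.ne', padicValNat.prime_pow,
      padicValNat.eq_zero_of_not_dvd hqcop]
    omega
  have hdiv : Nat.factorial (p * n + i) / p ^ padicValNat p (Nat.factorial (p * n + i)) = q * G := by
    rw [hval, hsplit, hq]
    have : p ^ n * (p ^ ν * q) * G = p ^ (n + ν) * (q * G) := by ring
    rw [this, Nat.mul_div_cancel_left _ (pow_pos hp.pos _)]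
  have hdivn : Nat.factorial n / p ^ ν = q := by
    rw [hq, Nat.mul_div_cancel_left _ hppos]
  unfold lastDigits
  rw [hdiv, ← hν, hdivn]
  calc (q * G) % p ^ k ≡ q * G [MOD p ^ k] := Nat.mod_modEq _ _
    _ ≡ q % p ^ k * G [MOD p ^ k] := Nat.ModEq.mul (Nat.mod_modEq _ _).symm rfl
end

section
/- Let b be a positive integer with at least two distinct prime factors and prime factorization b = p_1^{l_1}⋯p_r^{l_r}, ordered so that l_1(p_1−1) ≥ l_i(p_i−1) for all i. If l_1(p_1−1) > l_2(p_2−1), then for every k ≥ 1 all sufficiently large n satisfy ν_{p_i^{l_i}}(n!) ≥ ν_{p_1^{l_1}}(n!) + k for all i = 2,…,r. -/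
open Nat

lemma aux_padicValNat_pow {p : ℕ} (hp : p.Prime) (l : ℕ) (hl : 1 ≤ l) {n : ℕ} (hn : n ≠ 0) :
    padicValNat (p ^ l) n = padicValNat p n / l := by
  haveI : Fact p.Prime := ⟨hp⟩
  have hp2 : 2 ≤ p := hp.two_le
  have hne : p ^ l ≠ 1 := by
    have h1 : 2 ^ l ≤ p ^ l := Nat.pow_le_pow_left hp2 l
    have h2 : 2 ^ 1 ≤ 2 ^ l := Nat.pow_le_pow_right (by norm_num) hl
    simp only [pow_one] at h2
    omega
  rw [padicValNat_def' hne hn]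
  apply multiplicity_eq_of_dvd_of_not_dvd
  · rw [← pow_mul]
    exact dvd_trans (pow_dvd_pow p (Nat.mul_div_le _ _)) pow_padicValNat_dvd
  · rw [← pow_mul]
    intro h
    have hdm := Nat.div_add_mod (padicValNat p n) l
    have hml : padicValNat p n % l < l := Nat.mod_lt _ (by omega)
    have heq : l * (padicValNat p n / l + 1) = l * (padicValNat p n / l) + l := by ring
    exact pow_succ_padicValNat_not_dvd hn
      (dvd_trans (pow_dvd_pow p (by omega : padicValNat p n + 1 ≤ l * (padicValNat p n / l + 1))) h)

lemma aux_digitsum_le {p n : ℕ} (hp : 1 < p) (hn : n ≠ 0) :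
    (Nat.digits p n).sum ≤ (p - 1) * (Nat.log p n + 1) := by
  have h1 : ∀ x ∈ Nat.digits p n, x ≤ p - 1 := fun x hx =>
    Nat.le_sub_one_of_lt (Nat.digits_lt_base hp hx)
  have h2 := List.sum_le_card_nsmul _ _ h1
  rw [Nat.digits_len p n hp hn] at h2
  simpa [smul_eq_mul, mul_comm] using h2

lemma aux_four_pow (D : ℕ) : 2 * D * D + D + 1 ≤ 4 ^ D := by
  induction D with
  | zero => norm_num
  | succ d ih =>
    have hdd : d ≤ d * d := by
      rcases Nat.eq_zero_or_pos d with h | h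
      · simp [h]
      · exact Nat.le_mul_of_pos_left d h
    have h4 : 4 ^ (d + 1) = 4 * 4 ^ d := by ring
    rw [h4]
    nlinarith [ih, hdd]

lemma aux_lin_le_two_pow (A D : ℕ) :
    ∀ m, A + D * (m + (A + 2 * D)) ≤ 2 ^ (m + (A + 2 * D)) := by
  intro m
  induction m with
  | zero =>
    simp only [zero_add]
    have h1 : A + 1 ≤ 2 ^ A := Nat.lt_two_pow_self (n := A)
    have h2 : 2 * D * D + D + 1 ≤ 4 ^ D := aux_four_pow D
    have h3 : 2 ^ (A + 2 * D) = 2 ^ A * 4 ^ D := by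
      rw [pow_add, pow_mul]; norm_num
    rw [h3]
    nlinarith [Nat.mul_le_mul h1 h2, Nat.zero_le (A * (D * D)), Nat.zero_le (A * D)]
  | succ m ih =>
    have hD : D ≤ 2 ^ (m + (A + 2 * D)) := by
      have := Nat.lt_two_pow_self (n := m + (A + 2 * D))
      omega
    have h2 : 2 ^ (m + 1 + (A + 2 * D)) = 2 ^ (m + (A + 2 * D)) + 2 ^ (m + (A + 2 * D)) := by
      rw [show m + 1 + (A + 2 * D) = (m + (A + 2 * D)) + 1 by omega, pow_succ]
      ring
    have h5 : A + D * (m + 1 + (A + 2 * D)) = A + D * (m + (A + 2 * D)) + D := by ring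
    omega

lemma aux_eventually_log (A D : ℕ) : ∃ N, 1 ≤ N ∧ ∀ n ≥ N, A + D * Nat.log 2 n ≤ n := by
  refine ⟨2 ^ (A + 2 * D), Nat.one_le_two_pow, fun n hn => ?_⟩
  have hn0 : n ≠ 0 := by
    have : (1 : ℕ) ≤ 2 ^ (A + 2 * D) := Nat.one_le_two_pow
    omega
  have hT : A + 2 * D ≤ Nat.log 2 n := (Nat.le_log_iff_pow_le one_lt_two hn0).mpr hn
  obtain ⟨j, hj⟩ := Nat.exists_eq_add_of_le hT
  have h1 : A + D * Nat.log 2 n ≤ 2 ^ Nat.log 2 n := by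
    rw [hj, show A + 2 * D + j = j + (A + 2 * D) by omega]
    exact aux_lin_le_two_pow A D j
  have h2 : 2 ^ Nat.log 2 n ≤ n := Nat.pow_log_le_self 2 hn0
  omega

theorem stmt_4 (r : ℕ) (hr : 2 ≤ r) (p l : Fin r → ℕ) (b : ℕ)
    (i₀ : Fin r) (hi₀ : (i₀ : ℕ) = 0)
    (hp : ∀ i, (p i).Prime) (hl : ∀ i, 1 ≤ l i)
    (hinj : Function.Injective p)
    (hb : b = ∏ i, p i ^ l i)
    (horder : ∀ i j : Fin r, i ≤ j → l j * (p j - 1) ≤ l i * (p i - 1))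
    (hstrict : ∀ i : Fin r, i ≠ i₀ → l i * (p i - 1) < l i₀ * (p i₀ - 1)) :
    ∀ k : ℕ, 1 ≤ k → ∃ N : ℕ, ∀ n ≥ N, ∀ i : Fin r, i ≠ i₀ →
      padicValNat (p i₀ ^ l i₀) (Nat.factorial n) + k ≤
        padicValNat (p i ^ l i) (Nat.factorial n) := by
  intro k hk
  set a := l i₀ * (p i₀ - 1) with ha
  set A := ∑ j, (a * (l j * (p j - 1)) * k + a * p j * l j) with hA
  set D := ∑ j, a * p j with hD
  obtain ⟨N, hN1, hN⟩ := aux_eventually_log A D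
  refine ⟨N, fun n hn i hi => ?_⟩
  haveI : Fact (p i).Prime := ⟨hp i⟩
  haveI : Fact (p i₀).Prime := ⟨hp i₀⟩
  have hn0 : n ≠ 0 := by omega
  have hfac : n ! ≠ 0 := Nat.factorial_ne_zero n
  rw [aux_padicValNat_pow (hp i₀) _ (hl i₀) hfac, aux_padicValNat_pow (hp i) _ (hl i) hfac]
  set v0 := padicValNat (p i₀) (n !) with hv0
  set vi := padicValNat (p i) (n !) with hvi
  set s := (Nat.digits (p i) n).sum with hs
  set m := Nat.log 2 n with hm
  have hbig : A + D * m ≤ n := hN n hn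
  clear_value v0 vi s m A D a
  have hl0 : 1 ≤ l i₀ := hl i₀
  have hli : 1 ≤ l i := hl i
  have hpi2 : 2 ≤ p i := (hp i).two_le
  have hp02 : 2 ≤ p i₀ := (hp i₀).two_le
  -- Legendre
  have L0 : (p i₀ - 1) * v0 = n - (Nat.digits (p i₀) n).sum := by
    rw [hv0]; exact sub_one_mul_padicValNat_factorial n
  have Li : (p i - 1) * vi = n - s := by
    rw [hvi, hs]; exact sub_one_mul_padicValNat_factorial n
  have H1 : (p i₀ - 1) * v0 ≤ n := by rw [L0]; exact Nat.sub_le _ _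
  have H2 : n ≤ (p i - 1) * vi + s := by rw [Li]; omega
  -- digit sum bound
  have Hlog : Nat.log (p i) n ≤ m := by
    rw [hm]; exact Nat.log_anti_left (by norm_num) hpi2
  have Hs : s ≤ (p i - 1) * (m + 1) := by
    calc s ≤ (p i - 1) * (Nat.log (p i) n + 1) := by
          rw [hs]; exact aux_digitsum_le (hp i).one_lt hn0
      _ ≤ (p i - 1) * (m + 1) := Nat.mul_le_mul_left _ (by omega)
  -- division facts
  have e0 : l i₀ * (v0 / l i₀) ≤ v0 := Nat.mul_div_le _ _
  have ei : vi ≤ l i * (vi / l i) + (l i - 1) := by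
    have h1 := Nat.div_add_mod vi (l i)
    have h2 : vi % l i < l i := Nat.mod_lt _ (by omega)
    omega
  -- strictness
  have hca : l i * (p i - 1) + 1 ≤ a := hstrict i hi
  have hapos : 0 < a := by rw [ha]; exact Nat.mul_pos (by omega) (by omega)
  have hcpos : 0 < l i * (p i - 1) := Nat.mul_pos (by omega) (by omega)
  -- single terms of the sums
  have hA_i : a * (l i * (p i - 1)) * k + a * p i * l i ≤ A := by
    rw [hA]
    exact Finset.single_le_sum (f := fun j => a * (l j * (p j - 1)) * k + a * p j * l j)
      (fun _ _ => Nat.zero_le _) (Finset.mem_univ i)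
  have hD_i : a * p i ≤ D := by
    rw [hD]
    exact Finset.single_le_sum (f := fun j => a * p j) (fun _ _ => Nat.zero_le _)
      (Finset.mem_univ i)
  -- key inequalities
  have key1 : a * (v0 / l i₀) ≤ n := by
    calc a * (v0 / l i₀) = (p i₀ - 1) * (l i₀ * (v0 / l i₀)) := by rw [ha]; ring
      _ ≤ (p i₀ - 1) * v0 := Nat.mul_le_mul_left _ e0
      _ ≤ n := H1
  have key2 : a * n ≤ a * (l i * (p i - 1)) * (vi / l i)
      + a * ((p i - 1) * (l i - 1) + s) := by
    have h1 : n ≤ l i * (p i - 1) * (vi / l i) + ((p i - 1) * (l i - 1) + s) := by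
      calc n ≤ (p i - 1) * vi + s := H2
        _ ≤ (p i - 1) * (l i * (vi / l i) + (l i - 1)) + s :=
            Nat.add_le_add_right (Nat.mul_le_mul_left _ ei) s
        _ = l i * (p i - 1) * (vi / l i) + ((p i - 1) * (l i - 1) + s) := by ring
    calc a * n ≤ a * (l i * (p i - 1) * (vi / l i) + ((p i - 1) * (l i - 1) + s)) :=
          Nat.mul_le_mul_left _ h1
      _ = a * (l i * (p i - 1)) * (vi / l i) + a * ((p i - 1) * (l i - 1) + s) := by ring
  have key3 : a * (l i * (p i - 1)) * k + a * ((p i - 1) * (l i - 1) + s) ≤ n := by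
    have h4 : (p i - 1) * (l i - 1) + (p i - 1) * (m + 1) = (p i - 1) * ((l i - 1) + (m + 1)) := by
      ring
    have h3 : (l i - 1) + (m + 1) = l i + m := by omega
    have h6 : a * ((p i - 1) * (l i - 1) + s) ≤ a * p i * l i + a * p i * m := by
      calc a * ((p i - 1) * (l i - 1) + s)
          ≤ a * ((p i - 1) * (l i - 1) + (p i - 1) * (m + 1)) :=
            Nat.mul_le_mul_left _ (by omega)
        _ = a * ((p i - 1) * (l i + m)) := by rw [h4, h3]
        _ ≤ a * (p i * (l i + m)) := by
            exact Nat.mul_le_mul_left _ (Nat.mul_le_mul_right _ (by omega))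
        _ = a * p i * l i + a * p i * m := by ring
    have h5 : a * p i * m ≤ D * m := Nat.mul_le_mul_right m hD_i
    linarith [h5, h6, hA_i, hbig]
  -- combine
  have h1 : l i * (p i - 1) * (a * (v0 / l i₀)) ≤ l i * (p i - 1) * n :=
    Nat.mul_le_mul_left _ key1
  have h2 : l i * (p i - 1) * n + n ≤ a * n := by
    calc l i * (p i - 1) * n + n = (l i * (p i - 1) + 1) * n := by ring
      _ ≤ a * n := Nat.mul_le_mul_right n hca
  have hfin : a * (l i * (p i - 1)) * (v0 / l i₀ + k)
      ≤ a * (l i * (p i - 1)) * (vi / l i) := by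
    have e1 : a * (l i * (p i - 1)) * (v0 / l i₀ + k)
        = l i * (p i - 1) * (a * (v0 / l i₀)) + a * (l i * (p i - 1)) * k := by ring
    omega
  exact Nat.le_of_mul_le_mul_left hfin (Nat.mul_pos hapos hcpos)
end

section
/- Let p be a prime, k ≥ 1, and j with 1 ≤ j ≤ p^s m − 1 where m ≥ 1, s ≥ 0. If t ≥ k + ⌊log_p m⌋ and p ∤ n, then ℓ_{p,k}(n·p^{s+t} − j) ≡ −ℓ_{p,k}(j) (mod p^k). -/
theorem stmt_7 (p k n m s t j : ℕ) (hp : p.Prime) (hk : 1 ≤ k) (hm : 1 ≤ m)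
    (hj : 1 ≤ j) (hj' : j ≤ p ^ s * m - 1)
    (ht : k + Nat.log p m ≤ t) (hpn : ¬ p ∣ n) :
    ((lastDigits p k (n * p ^ (s + t) - j) : ℕ) : ℤ) ≡
      -(lastDigits p k j : ℤ) [ZMOD (p : ℤ) ^ k] := by
  haveI : Fact p.Prime := ⟨hp⟩
  have hp1 : 1 < p := hp.one_lt
  have hj0 : j ≠ 0 := by omega
  have hn0 : n ≠ 0 := by rintro rfl; exact hpn (dvd_zero p)
  set v := padicValNat p j with hv
  set L := Nat.log p m with hL
  have hpvj : p ^ v ∣ j := pow_padicValNat_dvd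
  -- bound on v
  have hjlt : j < p ^ (s + L + 1) := by
    calc j ≤ p ^ s * m - 1 := hj'
    _ < p ^ s * m := by
        have : 0 < p ^ s * m := by positivity
        omega
    _ ≤ p ^ s * p ^ (L + 1) := by
        exact Nat.mul_le_mul_left _ (le_of_lt (Nat.lt_pow_succ_log_self hp1 m))
    _ = p ^ (s + L + 1) := by ring
  have hvL : v ≤ s + L := by
    have h1 : p ^ v ≤ j := Nat.le_of_dvd (by omega) hpvj
    have h2 : p ^ v < p ^ (s + L + 1) := lt_of_le_of_lt h1 hjlt
    have := (Nat.pow_lt_pow_iff_right hp1).mp h2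
    omega
  have hvst : v + k ≤ s + t := by omega
  have hjlt2 : j < n * p ^ (s + t) := by
    calc j < p ^ (s + L + 1) := hjlt
    _ ≤ p ^ (s + t) := Nat.pow_le_pow_right (by omega) (by omega)
    _ ≤ n * p ^ (s + t) := Nat.le_mul_of_pos_left _ (by omega)
  set N := n * p ^ (s + t) - j with hN
  have hN0 : N ≠ 0 := by omega
  have hNadd : N + j = n * p ^ (s + t) := by omega
  have hdvdpow : ∀ w : ℕ, w ≤ s + t → p ^ w ∣ n * p ^ (s + t) := by
    intro w hw
    exact Dvd.dvd.mul_left (pow_dvd_pow p hw) n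
  have hpvN : p ^ v ∣ N := by
    have := Nat.dvd_sub (hdvdpow v (by omega)) hpvj
    exact this
  have hpv1N : ¬ p ^ (v + 1) ∣ N := by
    intro h
    have hNj : p ^ (v + 1) ∣ N + j := hNadd ▸ hdvdpow (v + 1) (by omega)
    have hjd : p ^ (v + 1) ∣ j := (Nat.dvd_add_right h).mp hNj
    have := (padicValNat_dvd_iff_le hj0).mp hjd
    omega
  have hvN : padicValNat p N = v := by
    have h1 : v ≤ padicValNat p N := (padicValNat_dvd_iff_le hN0).mp hpvN
    have h2 : padicValNat p N < v + 1 := by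
      by_contra h
      exact hpv1N ((padicValNat_dvd_iff_le hN0).mpr (by omega))
    omega
  set a := N / p ^ v with ha
  set b := j / p ^ v with hb
  have hpvpos : 0 < p ^ v := by positivity
  have hab : a + b = n * p ^ (s + t - v) := by
    have h1 : (a + b) * p ^ v = n * p ^ (s + t - v) * p ^ v := by
      rw [add_mul, Nat.div_mul_cancel hpvN, Nat.div_mul_cancel hpvj, hNadd,
        mul_assoc, ← pow_add]
      congr 2
      omega
    exact Nat.eq_of_mul_eq_mul_right hpvpos h1
  have hLD1 : lastDigits p k N = a % p ^ k := by
    simp [lastDigits, hvN, ha]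
  have hLD2 : lastDigits p k j = b % p ^ k := by
    simp [lastDigits, hv, hb]
  rw [hLD1, hLD2]
  push_cast
  have hmod : ((a : ℤ)) ≡ -(b : ℤ) [ZMOD ((p : ℤ)) ^ k] := by
    have hcast : (a : ℤ) + b = n * (p : ℤ) ^ (s + t - v) := by exact_mod_cast congrArg (Nat.cast : ℕ → ℤ) hab
    have hdvd : ((p : ℤ)) ^ k ∣ (n : ℤ) * (p : ℤ) ^ (s + t - v) := by
      exact Dvd.dvd.mul_left (pow_dvd_pow _ (by omega)) _
    have hd2 : ((p : ℤ)) ^ k ∣ -(b : ℤ) - (a : ℤ) := by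
      have he : -(b : ℤ) - (a : ℤ) = -((a : ℤ) + b) := by ring
      rw [he, hcast]
      exact dvd_neg.mpr hdvd
    exact Int.modEq_iff_dvd.mpr hd2
  calc ((a : ℤ)) % (p : ℤ) ^ k ≡ (a : ℤ) [ZMOD (p : ℤ) ^ k] := Int.emod_emod_of_dvd _ dvd_rfl
  _ ≡ -(b : ℤ) [ZMOD (p : ℤ) ^ k] := hmod
  _ ≡ -((b : ℤ) % (p : ℤ) ^ k) [ZMOD (p : ℤ) ^ k] := Int.ModEq.neg (Int.ModEq.symm (Int.emod_emod_of_dvd _ dvd_rfl : Int.ModEq _ _ _))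
end

section
/- Let p be a odd prime, k ≥ 1, and v a positive integer divisible by p^{k−1} and by 2. Then for all integers t ≥ 1, ℓ_{p,k}((p^t v)!) ≡ ℓ_{p,k}(v!) (mod p^k). -/
open Finset Nat

private lemma aux_div (p a c : ℕ) (hp0 : 0 < p) (hc : a + 1 = p * c) :
    a = p * (c - 1) + (p - 1) ∧ a / p = c - 1 := by
  have hc1 : 1 ≤ c := by
    rcases Nat.eq_zero_or_pos c with h | h
    · simp [h] at hc
    · exact h
  have h2 : p * (c - 1 + 1) = p * (c - 1) + p := by ring
  rw [Nat.sub_add_cancel hc1] at h2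
  have ha : a = p * (c - 1) + (p - 1) := by omega
  refine ⟨ha, ?_⟩
  rw [ha, Nat.mul_add_div hp0, Nat.div_eq_of_lt (by omega)]
  omega

private lemma factorial_split (p M : ℕ) (hp : p.Prime) :
    (p * M)! = p ^ M * M ! *
      ∏ i ∈ (range (p * M)).filter (fun i => ¬ p ∣ (i + 1)), (i + 1) := by
  have hp0 : 0 < p := hp.pos
  have h1 : ∏ i ∈ (range (p * M)).filter (fun i => p ∣ (i + 1)), (i + 1)
      = ∏ j ∈ range M, (p * (j + 1)) := by
    refine Finset.prod_bij' (fun a _ => a / p) (fun b _ => p * b + (p - 1))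
      ?hi ?hj ?left ?right ?h
    case hi =>
      intro a ha
      simp only [mem_filter, mem_range] at ha ⊢
      obtain ⟨ha1, c, hc⟩ := ha
      obtain ⟨-, hdiv⟩ := aux_div p a c hp0 hc
      have hcM : c ≤ M := Nat.le_of_mul_le_mul_left (by omega) hp0
      have : 1 ≤ c := by
        rcases Nat.eq_zero_or_pos c with h | h
        · simp [h] at hc
        · exact h
      omega
    case hj =>
      intro b hb
      simp only [mem_range] at hb
      simp only [mem_filter, mem_range]
      have hle : p * (b + 1) ≤ p * M := Nat.mul_le_mul_left p (by omega)
      have he : p * (b + 1) = p * b + p := by ring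
      exact ⟨by omega, ⟨b + 1, by omega⟩⟩
    case left =>
      intro a ha
      simp only [mem_filter, mem_range] at ha
      obtain ⟨ha1, c, hc⟩ := ha
      obtain ⟨he, hdiv⟩ := aux_div p a c hp0 hc
      simp only [hdiv]
      omega
    case right =>
      intro b hb
      simp only [Nat.mul_add_div hp0, Nat.div_eq_of_lt (by omega : p - 1 < p)]
      omega
    case h =>
      intro a ha
      simp only [mem_filter, mem_range] at ha
      obtain ⟨ha1, c, hc⟩ := ha
      obtain ⟨he, hdiv⟩ := aux_div p a c hp0 hc
      have hc1 : 1 ≤ c := by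
        rcases Nat.eq_zero_or_pos c with h | h
        · simp [h] at hc
        · exact h
      have h3 : p * (c - 1 + 1) = p * (c - 1) + p := by ring
      simp only [hdiv]
      omega
  rw [← Finset.prod_range_add_one_eq_factorial (p * M),
    ← Finset.prod_filter_mul_prod_filter_not (range (p * M)) (fun i => p ∣ (i + 1))]
  congr 1
  rw [h1, Finset.prod_mul_distrib, Finset.prod_const, card_range,
    Finset.prod_range_add_one_eq_factorial]

private lemma prod_all_units_sq {G : Type*} [CommGroup G] [Fintype G] :
    (∏ u : G, u) * (∏ u : G, u) = 1 := by
  have h : ∏ u : G, u⁻¹ = ∏ u : G, u :=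
    Fintype.prod_bijective (fun x => x⁻¹) (Equiv.inv G).bijective _ _ (fun x => rfl)
  calc (∏ u : G, u) * (∏ u : G, u) = (∏ u : G, u) * (∏ u : G, u⁻¹) := by rw [h]
    _ = ∏ u : G, (u * u⁻¹) := by rw [Finset.prod_mul_distrib]
    _ = 1 := by simp

private lemma block_prod (p k : ℕ) (hp : p.Prime) (hk : 1 ≤ k) [NeZero (p ^ k)] :
    (∏ i ∈ range (p ^ k), if ¬ p ∣ (i + 1) then ((i + 1 : ℕ) : ZMod (p ^ k)) else 1)
      = ((∏ u : (ZMod (p ^ k))ˣ, u : (ZMod (p ^ k))ˣ) : ZMod (p ^ k)) := by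
  have hp0 : 0 < p := hp.pos
  have hpk1 : 1 < p ^ k := Nat.one_lt_pow (by omega) hp.two_le
  haveI : Fact (1 < p ^ k) := ⟨hpk1⟩
  have hppk : p ∣ p ^ k := dvd_pow_self p (by omega)
  rw [← Finset.prod_filter,
    show ((∏ u : (ZMod (p ^ k))ˣ, u : (ZMod (p ^ k))ˣ) : ZMod (p ^ k))
      = ∏ u : (ZMod (p ^ k))ˣ, ((u : ZMod (p ^ k))) from (map_prod (Units.coeHom _) _ _)]
  have hcop : ∀ a : ℕ, ¬ p ∣ (a + 1) → Nat.Coprime (a + 1) (p ^ k) := fun a h =>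
    Nat.Coprime.pow_right _ (Nat.coprime_comm.mp ((hp.coprime_iff_not_dvd).mpr h))
  have hvne : ∀ u : (ZMod (p ^ k))ˣ, (u : ZMod (p ^ k)).val ≠ 0 := by
    intro u h
    apply Units.ne_zero u
    have h2 := ZMod.natCast_rightInverse (n := p ^ k) (u : ZMod (p ^ k))
    rw [← h2, h]; simp
  refine Finset.prod_bij'
    (fun a ha => ZMod.unitOfCoprime (a + 1) (hcop a (Finset.mem_filter.mp ha).2))
    (fun u _ => (u : ZMod (p ^ k)).val - 1) ?hi ?hj ?left ?right ?h
  case hi => intro a ha; exact Finset.mem_univ _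
  case hj =>
    intro u _
    simp only [mem_filter, mem_range]
    have hval : (u : ZMod (p ^ k)).val < p ^ k := ZMod.val_lt _
    have h0 := hvne u
    have hcopu : Nat.Coprime ((u : ZMod (p ^ k)).val) (p ^ k) := ZMod.val_coe_unit_coprime u
    refine ⟨by omega, ?_⟩
    intro hdvd
    rw [Nat.sub_add_cancel (by omega)] at hdvd
    have h1 : p ∣ Nat.gcd ((u : ZMod (p ^ k)).val) (p ^ k) := Nat.dvd_gcd hdvd hppk
    rw [Nat.Coprime] at hcopu
    rw [hcopu] at h1
    have := Nat.le_of_dvd one_pos h1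
    have := hp.two_le
    omega
  case left =>
    intro a ha
    simp only [mem_filter, mem_range] at ha
    have h1 : a + 1 < p ^ k := by
      rcases Nat.lt_or_ge (a + 1) (p ^ k) with h | h
      · exact h
      · exact absurd ((by omega : a + 1 = p ^ k) ▸ hppk) ha.2
    simp only [ZMod.coe_unitOfCoprime, ZMod.val_cast_of_lt h1]
    omega
  case right =>
    intro u _
    have h0 := hvne u
    apply Units.ext
    rw [ZMod.coe_unitOfCoprime, Nat.sub_add_cancel (by omega)]
    exact ZMod.natCast_rightInverse _
  case h =>
    intro a ha
    rw [ZMod.coe_unitOfCoprime]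

private lemma W_eq_one (p k M : ℕ) (hp : p.Prime) (hodd : Odd p) (hk : 1 ≤ k)
    (h1 : p ^ (k - 1) ∣ M) (h2 : 2 ∣ M) :
    ((∏ i ∈ (range (p * M)).filter (fun i => ¬ p ∣ (i + 1)), (i + 1) : ℕ)
      : ZMod (p ^ k)) = 1 := by
  have hp0 : 0 < p := hp.pos
  have hpk1 : 1 < p ^ k := Nat.one_lt_pow (by omega) hp.two_le
  haveI : NeZero (p ^ k) := ⟨by omega⟩
  set g : ℕ → ZMod (p ^ k) :=
    fun i => if ¬ p ∣ (i + 1) then ((i + 1 : ℕ) : ZMod (p ^ k)) else 1 with hg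
  have hcast : ((∏ i ∈ (range (p * M)).filter (fun i => ¬ p ∣ (i + 1)), (i + 1) : ℕ)
      : ZMod (p ^ k)) = ∏ i ∈ range (p * M), g i := by
    rw [Nat.cast_prod, Finset.prod_filter]
  rw [hcast]
  -- blocks
  have hblock : ∀ N i, i ∈ range (p ^ k) → g (p ^ k * N + i) = g i := by
    intro N i _
    have hd : p ∣ p ^ k * N := (dvd_pow_self p (by omega)).mul_right N
    have hiff : (p ∣ p ^ k * N + i + 1) ↔ (p ∣ i + 1) := by
      rw [add_assoc]
      exact Nat.dvd_add_right hd
    have hcast2 : ((p ^ k * N + i + 1 : ℕ) : ZMod (p ^ k)) = ((i + 1 : ℕ) : ZMod (p ^ k)) := by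
      rw [Nat.cast_add, Nat.cast_add, Nat.cast_mul, ZMod.natCast_self, zero_mul, zero_add,
        Nat.cast_add]
    by_cases hpi : p ∣ (i + 1) <;> simp [hg, hpi, hiff.not, hcast2]
  have hpow : ∀ N, ∏ i ∈ range (p ^ k * N), g i = (∏ i ∈ range (p ^ k), g i) ^ N := by
    intro N
    induction N with
    | zero => simp
    | succ N ih =>
      rw [Nat.mul_succ, Finset.prod_range_add, ih,
        Finset.prod_congr rfl (hblock N), pow_succ]
  -- p * M = p ^ k * d with d even
  obtain ⟨d, hd⟩ := h1
  have hpM : p * M = p ^ k * d := by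
    rw [hd, ← mul_assoc, mul_comm p (p ^ (k - 1)), ← pow_succ, Nat.sub_add_cancel hk]
  have hdeven : 2 ∣ d := by
    have hco : Nat.Coprime 2 (p ^ (k - 1)) :=
      Nat.Coprime.pow_right _ (Nat.prime_two.coprime_iff_not_dvd.mpr
        (by intro hdvd; have := Nat.odd_iff.mp hodd; omega))
    exact hco.dvd_of_dvd_mul_left (hd ▸ h2)
  obtain ⟨e, he⟩ := hdeven
  rw [hpM, hpow d, block_prod p k hp hk, he]
  rw [pow_mul, ← Units.val_pow_eq_pow_val, ← Units.val_pow_eq_pow_val]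
  norm_cast
  rw [pow_two, prod_all_units_sq, one_pow, Units.val_one]

private lemma step (p k M : ℕ) (hp : p.Prime) (hodd : Odd p) (hk : 1 ≤ k)
    (hM : 0 < M) (h1 : p ^ (k - 1) ∣ M) (h2 : 2 ∣ M) :
    ordCompl[p] ((p * M)!) ≡ ordCompl[p] (M !) [MOD p ^ k] := by
  set W := ∏ i ∈ (range (p * M)).filter (fun i => ¬ p ∣ (i + 1)), (i + 1) with hW
  have hWnd : ¬ p ∣ W := by
    intro h
    obtain ⟨i, hi, hdvd⟩ := hp.prime.exists_mem_finset_dvd h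
    exact (mem_filter.mp hi).2 hdvd
  have key : ordCompl[p] ((p * M)!) = ordCompl[p] (M !) * W := by
    rw [factorial_split p M hp, ← hW, Nat.ordCompl_mul, Nat.ordCompl_mul]
    have e1 : ordCompl[p] (p ^ M) = 1 := by
      rw [hp.factorization_pow, Finsupp.single_eq_same, Nat.div_self (pow_pos hp.pos M)]
    have e2 : ordCompl[p] W = W := by
      rw [Nat.factorization_eq_zero_of_not_dvd hWnd, pow_zero, Nat.div_one]
    rw [e1, e2, one_mul]
  rw [key, ← ZMod.natCast_eq_natCast_iff]
  push_cast
  rw [W_eq_one p k M hp hodd hk h1 h2, mul_one]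

theorem stmt_9 (p k v : ℕ) (hp : p.Prime) (hodd : Odd p) (hk : 1 ≤ k)
    (hv : 0 < v) (hv1 : p ^ (k - 1) ∣ v) (hv2 : 2 ∣ v) :
    ∀ t : ℕ, 1 ≤ t →
      lastDigits p k (Nat.factorial (p ^ t * v)) ≡
        lastDigits p k (Nat.factorial v) [MOD p ^ k] := by
  have hld : ∀ m : ℕ, lastDigits p k m = (ordCompl[p] m) % p ^ k := by
    intro m
    rw [lastDigits, ← Nat.factorization_def m hp]
  have main : ∀ t : ℕ, 1 ≤ t →
      ordCompl[p] ((p ^ t * v)!) ≡ ordCompl[p] (v !) [MOD p ^ k] := by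
    intro t ht
    induction t, ht using Nat.le_induction with
    | base =>
      rw [pow_one]
      exact step p k v hp hodd hk hv hv1 hv2
    | succ t ht ih =>
      have hrw : p ^ (t + 1) * v = p * (p ^ t * v) := by ring
      rw [hrw]
      refine Nat.ModEq.trans ?_ ih
      exact step p k (p ^ t * v) hp hodd hk
        (Nat.mul_pos (pow_pos hp.pos t) hv)
        (hv1.trans (dvd_mul_left v (p ^ t)))
        (hv2.trans (dvd_mul_left v (p ^ t)))
  intro t ht
  calc lastDigits p k ((p ^ t * v)!) ≡ ordCompl[p] ((p ^ t * v)!) [MOD p ^ k] := by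
        rw [hld]; exact Nat.mod_modEq _ _
    _ ≡ ordCompl[p] (v !) [MOD p ^ k] := main t ht
    _ ≡ lastDigits p k (v !) [MOD p ^ k] := by
        rw [hld]; exact (Nat.mod_modEq _ _).symm
end

section
/- Let p be a prime, k ≥ 1, u ≥ 1, and v divisible by lcm(p^{k−1}, u, 2) (and by 4 if p = 2, k = 2). Then for every unit x modulo p^k, every residue y modulo u, and every residue z modulo v, there exists n ≥ 0 with ℓ_{p,k}(n!) = x, ν_p(n!) ≡ y (mod u), and n ≡ z (mod v). -/
namespace Stmt12

open Finset Nat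

variable (p k : ℕ)

/-- the image of `m / p ^ ν_p(m)` in `ZMod (p^k)`. -/
def lr (m : ℕ) : ZMod (p ^ k) := ((m / p ^ padicValNat p m : ℕ) : ZMod (p ^ k))

def Wf (j : ℕ) : ZMod (p ^ k) := if p ∣ j then 1 else (j : ZMod (p ^ k))

def W (n : ℕ) : ZMod (p ^ k) := ∏ j ∈ Finset.range n, Wf p k (j + 1)

theorem W_succ (p k n : ℕ) : W p k (n + 1) = W p k n * Wf p k (n + 1) :=
  Finset.prod_range_succ _ n

def eps : ZMod (p ^ k) := W p k (p ^ k)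

def sig (j : ℕ) : ℕ := ∑ r ∈ Finset.range j, p ^ r

variable {p k}

section basic

variable (hp : p.Prime)
include hp

theorem lr_mul {a b : ℕ} (ha : a ≠ 0) (hb : b ≠ 0) :
    lr p k (a * b) = lr p k a * lr p k b := by
  haveI := Fact.mk hp
  unfold lr
  rw [padicValNat.mul ha hb, pow_add, ← Nat.cast_mul,
    Nat.div_mul_div_comm pow_padicValNat_dvd pow_padicValNat_dvd]

omit hp in
theorem lr_one : lr p k 1 = 1 := by
  simp [lr]

theorem lr_pow (j : ℕ) : lr p k (p ^ j) = 1 := by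
  haveI := Fact.mk hp
  unfold lr
  rw [padicValNat.prime_pow, Nat.div_self (pow_pos hp.pos j)]
  simp

theorem lr_self : lr p k p = 1 := by
  simpa using lr_pow hp 1

omit hp in
theorem lr_of_not_dvd {m : ℕ} (h : ¬ p ∣ m) : lr p k m = (m : ZMod (p ^ k)) := by
  unfold lr
  rw [padicValNat.eq_zero_of_not_dvd h]
  simp

theorem lr_fact_succ (n : ℕ) :
    lr p k ((n + 1)!) = lr p k n ! * lr p k (n + 1) := by
  rw [Nat.factorial_succ, mul_comm (n+1)]
  exact lr_mul hp (Nat.factorial_ne_zero n) (Nat.succ_ne_zero n)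

theorem v_fact_succ (n : ℕ) :
    padicValNat p ((n + 1)!) = padicValNat p n ! + padicValNat p (n + 1) := by
  haveI := Fact.mk hp
  rw [Nat.factorial_succ, mul_comm (n+1)]
  exact padicValNat.mul (Nat.factorial_ne_zero n) (Nat.succ_ne_zero n)

theorem lr_fact_rec (n : ℕ) :
    lr p k (n !) = W p k n * lr p k ((n / p)!) := by
  induction n with
  | zero => simp [W, lr]
  | succ n ih =>
    rw [lr_fact_succ hp]
    by_cases h : p ∣ n + 1
    · obtain ⟨m, hm⟩ := h
      have hm0 : m ≠ 0 := by rintro rfl; simp at hm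
      have hnp : (n + 1) / p = n / p + 1 := Nat.succ_div_of_dvd ⟨m, hm⟩
      have h3 : n / p + 1 = m := by
        have h4 := hnp
        rw [hm, Nat.mul_div_cancel_left m hp.pos] at h4
        omega
      have h1 : lr p k (n + 1) = lr p k m := by
        rw [hm, lr_mul hp hp.pos.ne' hm0, lr_self hp, one_mul]
      have h2 : Wf p k (n + 1) = 1 := by
        unfold Wf
        rw [if_pos ⟨m, hm⟩]
      rw [hnp, lr_fact_succ hp, h3, W, Finset.prod_range_succ, ← W, h1, h2, ih]
      ring
    · have hnp : (n + 1) / p = n / p := by rw [Nat.succ_div, if_neg h, add_zero]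
      have h2 : Wf p k (n + 1) = ((n + 1 : ℕ) : ZMod (p ^ k)) := by
        unfold Wf
        rw [if_neg h]
      rw [hnp, W, Finset.prod_range_succ, ← W, h2, lr_of_not_dvd h, ih]
      ring

theorem v_fact_rec (n : ℕ) :
    padicValNat p (n !) = n / p + padicValNat p ((n / p)!) := by
  haveI := Fact.mk hp
  induction n with
  | zero => simp
  | succ n ih =>
    rw [v_fact_succ hp]
    by_cases h : p ∣ n + 1
    · obtain ⟨m, hm⟩ := h
      have hm0 : m ≠ 0 := by rintro rfl; simp at hm
      have hnp : (n + 1) / p = n / p + 1 := Nat.succ_div_of_dvd ⟨m, hm⟩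
      have h3 : n / p + 1 = m := by
        have h4 := hnp
        rw [hm, Nat.mul_div_cancel_left m hp.pos] at h4
        omega
      have h1 : padicValNat p (n + 1) = 1 + padicValNat p m := by
        rw [hm, padicValNat.mul hp.pos.ne' hm0, padicValNat.self hp.one_lt]
      rw [hnp, v_fact_succ hp, h3, h1, ih]
      omega
    · have hnp : (n + 1) / p = n / p := by rw [Nat.succ_div, if_neg h, add_zero]
      rw [hnp, padicValNat.eq_zero_of_not_dvd h, ih]
      ring

theorem Wf_unit (hk : 1 ≤ k) (j : ℕ) : IsUnit (Wf p k j) := by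
  haveI : NeZero (p ^ k) := ⟨(pow_pos hp.pos k).ne'⟩
  unfold Wf
  split
  · exact isUnit_one
  · rename_i h
    rw [ZMod.isUnit_iff_coprime]
    exact (Nat.Coprime.pow_right k ((hp.coprime_iff_not_dvd.2 h).symm))

theorem W_unit (hk : 1 ≤ k) (n : ℕ) : IsUnit (W p k n) := by
  unfold W
  refine Finset.prod_induction _ IsUnit (fun a b => IsUnit.mul) isUnit_one ?_
  exact fun i _ => Wf_unit hp hk (i + 1)

theorem lr_unit (hk : 1 ≤ k) {n : ℕ} (hn : n ≠ 0) : IsUnit (lr p k n) := by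
  haveI : NeZero (p ^ k) := ⟨(pow_pos hp.pos k).ne'⟩
  unfold lr
  rw [ZMod.isUnit_iff_coprime]
  have h1 : Nat.Coprime p (n / p ^ padicValNat p n) := by
    have := Nat.coprime_ordCompl hp hn
    rwa [Nat.factorization_def n hp] at this
  exact Nat.Coprime.pow_right k h1.symm

theorem lr_fact_unit (hk : 1 ≤ k) (n : ℕ) : IsUnit (lr p k (n !)) :=
  lr_unit hp hk (Nat.factorial_ne_zero n)

omit hp in
theorem W_add_pow (hp : p.Prime) (hk : 1 ≤ k) (x : ℕ) :
    W p k (x + p ^ k) = W p k x * eps p k := by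
  induction x with
  | zero => simp [eps, W]
  | succ x ih =>
    have harr : x + 1 + p ^ k = (x + p ^ k) + 1 := by ring
    have hterm : Wf p k (x + p ^ k + 1) = Wf p k (x + 1) := by
      unfold Wf
      have hpk : p ∣ p ^ k := dvd_pow_self p (by omega)
      have hdvd : p ∣ x + p ^ k + 1 ↔ p ∣ x + 1 := by
        constructor
        · intro h
          have := Nat.dvd_sub h hpk
          simpa [show x + p ^ k + 1 - p ^ k = x + 1 by omega] using this
        · intro h
          have harr2 : x + p ^ k + 1 = (x + 1) + p ^ k := by ring
          rw [harr2]; exact Nat.dvd_add h hpk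
      have hcast : ((x + p ^ k + 1 : ℕ) : ZMod (p ^ k)) = ((x + 1 : ℕ) : ZMod (p ^ k)) := by
        rw [show x + p ^ k + 1 = (x + 1) + p ^ k by ring, Nat.cast_add,
          ZMod.natCast_self, add_zero]
      by_cases h : p ∣ x + 1
      · rw [if_pos (hdvd.2 h), if_pos h]
      · rw [if_neg (fun hh => h (hdvd.1 hh)), if_neg h, hcast]
    rw [harr, W_succ, ih, hterm, W_succ]
    ring

omit hp in
theorem W_add_mul_pow (hp : p.Prime) (hk : 1 ≤ k) (x b : ℕ) :
    W p k (x + b * p ^ k) = W p k x * eps p k ^ b := by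
  induction b with
  | zero => simp
  | succ b ih =>
    have : x + (b + 1) * p ^ k = (x + b * p ^ k) + p ^ k := by ring
    rw [this, W_add_pow hp hk, ih, pow_succ]
    ring

theorem lr_insert (hk : 1 ≤ k) :
    ∀ (j D n : ℕ), n < p ^ j →
      lr p k ((n + D * p ^ (j + (k - 1)))!) =
        lr p k (n !) * eps p k ^ (D * sig p j) * lr p k ((D * p ^ (k - 1))!) := by
  intro j
  induction j with
  | zero =>
    intro D n hn
    have hn0 : n = 0 := by
      have := hn; simp at this; omega
    subst hn0
    simp [sig, lr_one]
  | succ j ih =>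
    intro D n hn
    have he : j + 1 + (k - 1) = (j + (k - 1)) + 1 := by omega
    have hdiv : (n + D * p ^ (j + 1 + (k - 1))) / p = n / p + D * p ^ (j + (k - 1)) := by
      rw [he, pow_succ, ← mul_assoc]
      exact Nat.add_mul_div_right n _ hp.pos
    have hW : W p k (n + D * p ^ (j + 1 + (k - 1))) = W p k n * eps p k ^ (D * p ^ j) := by
      have hexp : j + 1 + (k - 1) = j + k := by omega
      have harr : n + D * p ^ (j + 1 + (k - 1)) = n + (D * p ^ j) * p ^ k := by
        rw [hexp, mul_assoc, ← pow_add]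
      rw [harr, W_add_mul_pow hp hk]
    have hn' : n / p < p ^ j := by
      rw [Nat.div_lt_iff_lt_mul hp.pos, ← pow_succ]
      exact hn
    rw [lr_fact_rec hp, hdiv, hW, ih D (n / p) hn', lr_fact_rec hp n]
    have hsig : sig p (j + 1) = sig p j + p ^ j := Finset.sum_range_succ _ j
    rw [hsig, Nat.mul_add, pow_add]
    ring

theorem v_insert :
    ∀ (j D n : ℕ), n < p ^ j →
      padicValNat p ((n + D * p ^ j)!) =
        padicValNat p (n !) + D * sig p j + padicValNat p (D !) := by
  intro j
  induction j with
  | zero =>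
    intro D n hn
    have hn0 : n = 0 := by simp at hn; omega
    subst hn0
    simp [sig]
  | succ j ih =>
    intro D n hn
    have hdiv : (n + D * p ^ (j + 1)) / p = n / p + D * p ^ j := by
      rw [pow_succ, ← mul_assoc]
      exact Nat.add_mul_div_right n _ hp.pos
    have hn' : n / p < p ^ j := by
      rw [Nat.div_lt_iff_lt_mul hp.pos, ← pow_succ]
      exact hn
    rw [v_fact_rec hp, hdiv, ih D (n / p) hn', v_fact_rec hp n]
    have hsig : sig p (j + 1) = sig p j + p ^ j := Finset.sum_range_succ _ j
    rw [hsig]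
    ring

theorem v_fact_p : padicValNat p (p !) = 1 := by
  haveI := Fact.mk hp
  have hps : p - 1 + 1 = p := by
    have := hp.pos
    omega
  have h1 : p ! = p * (p - 1)! := by
    calc p ! = ((p - 1) + 1)! := by rw [hps]
    _ = ((p - 1) + 1) * (p - 1)! := Nat.factorial_succ _
    _ = p * (p - 1)! := by rw [hps]
  have h2 : ¬ p ∣ (p - 1)! := by
    intro hcon
    have := (Nat.Prime.dvd_factorial hp).1 hcon
    omega
  rw [h1, padicValNat.mul hp.pos.ne' (Nat.factorial_ne_zero _), padicValNat.self hp.one_lt,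
    padicValNat.eq_zero_of_not_dvd h2]

end basic

theorem fact_prod {a b : ℕ} (h : b ≤ a) :
    a ! = (a - b)! * ∏ i ∈ Finset.range b, (a - i) := by
  induction b with
  | zero => simp
  | succ b ih =>
    have hb : b ≤ a := by omega
    have h1 : a - b = (a - (b + 1)) + 1 := by omega
    rw [Finset.prod_range_succ, ih hb, h1, Nat.factorial_succ]
    ring

section ratio

variable (hp : p.Prime) (hk : 1 ≤ k)
include hp hk

/-- the constant `K`. -/
def Kc (p k : ℕ) : ZMod (p ^ k) := ∏ i ∈ Finset.range (p ^ k - 1), (-(lr p k (i + 1)))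

theorem lr_prod {s : Finset ℕ} {f : ℕ → ℕ} (hf : ∀ i ∈ s, f i ≠ 0) :
    lr p k (∏ i ∈ s, f i) = ∏ i ∈ s, lr p k (f i) := by
  classical
  induction s using Finset.induction with
  | empty => simp [lr_one]
  | insert a s' hx ih =>
    rw [Finset.prod_insert hx, Finset.prod_insert hx,
      lr_mul hp (hf _ (Finset.mem_insert_self a s'))
        (Finset.prod_ne_zero_iff.2 fun i hi => hf i (Finset.mem_insert_of_mem hi)),
      ih fun i hi => hf i (Finset.mem_insert_of_mem hi)]

theorem v_prod {s : Finset ℕ} {f : ℕ → ℕ} (hf : ∀ i ∈ s, f i ≠ 0) :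
    padicValNat p (∏ i ∈ s, f i) = ∑ i ∈ s, padicValNat p (f i) := by
  classical
  haveI := Fact.mk hp
  induction s using Finset.induction with
  | empty => simp
  | insert a s' hx ih =>
    rw [Finset.prod_insert hx, Finset.sum_insert hx,
      padicValNat.mul (hf _ (Finset.mem_insert_self a s'))
        (Finset.prod_ne_zero_iff.2 fun i hi => hf i (Finset.mem_insert_of_mem hi)),
      ih fun i hi => hf i (Finset.mem_insert_of_mem hi)]

theorem pt_val {m i : ℕ} (hm : m ≠ 0) (h1 : 1 ≤ i) (h2 : i < p ^ k) :
    padicValNat p (m * p ^ (2 * k - 1) - i) = padicValNat p i := by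
  haveI := Fact.mk hp
  set vi := padicValNat p i with hvi
  have hne : i ≠ 0 := by omega
  have hdvd_i : p ^ vi ∣ i := pow_padicValNat_dvd
  have hnd : ¬ p ^ (vi + 1) ∣ i := pow_succ_padicValNat_not_dvd hne
  have hvik : vi < k := by
    by_contra hcon
    push_neg at hcon
    have hdk : p ^ k ∣ i := dvd_trans (pow_dvd_pow p hcon) hdvd_i
    have := Nat.le_of_dvd (by omega) hdk
    omega
  set N := m * p ^ (2 * k - 1) with hN
  have hklt : k ≤ 2 * k - 1 := by omega
  have hpkN : p ^ k ≤ N := by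
    calc p ^ k ≤ p ^ (2 * k - 1) := Nat.pow_le_pow_right hp.pos hklt
    _ ≤ N := Nat.le_mul_of_pos_left _ (by omega)
  have hiN : i ≤ N := le_trans (le_of_lt h2) hpkN
  have hd1 : p ^ vi ∣ N := dvd_mul_of_dvd_right (pow_dvd_pow p (by omega : vi ≤ 2 * k - 1)) m
  have hd2 : p ^ (vi + 1) ∣ N :=
    dvd_mul_of_dvd_right (pow_dvd_pow p (by omega : vi + 1 ≤ 2 * k - 1)) m
  have hsub : p ^ vi ∣ N - i := Nat.dvd_sub hd1 hdvd_i
  have hsub2 : ¬ p ^ (vi + 1) ∣ N - i := by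
    intro hcon
    have hthis : p ^ (vi + 1) ∣ N - (N - i) := Nat.dvd_sub hd2 hcon
    rw [Nat.sub_sub_self hiN] at hthis
    exact hnd hthis
  have hne2 : N - i ≠ 0 := by omega
  apply le_antisymm
  · by_contra hcon
    push_neg at hcon
    exact hsub2 (dvd_trans (pow_dvd_pow p hcon) pow_padicValNat_dvd)
  · exact (padicValNat_dvd_iff_le hne2).1 hsub

theorem pt_lr {m i : ℕ} (hm : m ≠ 0) (h1 : 1 ≤ i) (h2 : i < p ^ k) :
    lr p k (m * p ^ (2 * k - 1) - i) = -(lr p k i) := by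
  haveI := Fact.mk hp
  haveI : NeZero (p ^ k) := ⟨(pow_pos hp.pos k).ne'⟩
  set vi := padicValNat p i with hvi
  have hne : i ≠ 0 := by omega
  have hdvd_i : p ^ vi ∣ i := pow_padicValNat_dvd
  have hvik : vi < k := by
    by_contra hcon
    push_neg at hcon
    have hdk : p ^ k ∣ i := dvd_trans (pow_dvd_pow p hcon) hdvd_i
    have := Nat.le_of_dvd (by omega) hdk
    omega
  set N := m * p ^ (2 * k - 1) with hN
  have hklt : k ≤ 2 * k - 1 := by omega
  have hpkN : p ^ k ≤ N := by
    calc p ^ k ≤ p ^ (2 * k - 1) := Nat.pow_le_pow_right hp.pos hklt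
    _ ≤ N := Nat.le_mul_of_pos_left _ (by omega)
  have hiN : i ≤ N := le_trans (le_of_lt h2) hpkN
  obtain ⟨i', hi'⟩ := hdvd_i
  set M := m * p ^ (2 * k - 1 - vi) with hM
  have hNfac : N = M * p ^ vi := by
    rw [hN, hM, mul_assoc, ← pow_add]
    congr 2
    omega
  have hsub : N - i = (M - i') * p ^ vi := by
    rw [Nat.sub_mul, ← hNfac, hi', mul_comm (p ^ vi) i']
  have hii' : i' ≤ M := by
    have h := hiN
    rw [hNfac, hi', mul_comm (p ^ vi) i'] at h
    exact Nat.le_of_mul_le_mul_right h (pow_pos hp.pos vi)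
  have hval : padicValNat p (N - i) = vi := pt_val hp hk hm h1 h2
  have hdivM : p ^ k ∣ M := by
    rw [hM]
    exact dvd_mul_of_dvd_right (pow_dvd_pow p (by omega : k ≤ 2 * k - 1 - vi)) m
  unfold lr
  rw [hval, ← hvi, hsub, Nat.mul_div_cancel (M - i') (pow_pos hp.pos vi),
    hi', mul_comm (p ^ vi) i', Nat.mul_div_cancel i' (pow_pos hp.pos vi),
    Nat.cast_sub hii', (ZMod.natCast_eq_zero_iff M (p ^ k)).2 hdivM, zero_sub]

theorem R1 {m : ℕ} (hm : m ≠ 0) (hpm : ¬ p ∣ m) :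
    lr p k ((m * p ^ (2 * k - 1))!) =
      (m : ZMod (p ^ k)) * Kc p k * lr p k ((m * p ^ (2 * k - 1) - p ^ k)!) := by
  haveI := Fact.mk hp
  set N := m * p ^ (2 * k - 1) with hN
  have hklt : k ≤ 2 * k - 1 := by omega
  have hpkN : p ^ k ≤ N := by
    calc p ^ k ≤ p ^ (2 * k - 1) := Nat.pow_le_pow_right hp.pos hklt
    _ ≤ N := Nat.le_mul_of_pos_left _ (by omega)
  have hterm_ne : ∀ i ∈ Finset.range (p ^ k), N - i ≠ 0 := by
    intro i hi
    rw [Finset.mem_range] at hi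
    omega
  have hfp := fact_prod (a := N) (b := p ^ k) hpkN
  have hcalc : lr p k (N !) =
      lr p k ((N - p ^ k)!) * ∏ i ∈ Finset.range (p ^ k), lr p k (N - i) := by
    rw [hfp, lr_mul hp (Nat.factorial_ne_zero _)
      (Finset.prod_ne_zero_iff.2 hterm_ne), lr_prod hp hk hterm_ne]
  have hsplit : ∏ i ∈ Finset.range (p ^ k), lr p k (N - i) =
      (∏ i ∈ Finset.range (p ^ k - 1), lr p k (N - (i + 1))) * lr p k N := by
    have hpk1 : (p ^ k - 1) + 1 = p ^ k := by
      have := pow_pos hp.pos k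
      omega
    calc ∏ i ∈ Finset.range (p ^ k), lr p k (N - i)
        = ∏ i ∈ Finset.range ((p ^ k - 1) + 1), lr p k (N - i) := by rw [hpk1]
      _ = (∏ i ∈ Finset.range (p ^ k - 1), lr p k (N - (i + 1))) * lr p k (N - 0) :=
          Finset.prod_range_succ' _ _
      _ = (∏ i ∈ Finset.range (p ^ k - 1), lr p k (N - (i + 1))) * lr p k N := by
          rw [Nat.sub_zero]
  have hlrN : lr p k N = (m : ZMod (p ^ k)) := by
    rw [hN, lr_mul hp hm (pow_pos hp.pos _).ne', lr_pow hp, mul_one, lr_of_not_dvd hpm]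
  have hterms : ∀ i ∈ Finset.range (p ^ k - 1), lr p k (N - (i + 1)) = -(lr p k (i + 1)) := by
    intro i hi
    rw [Finset.mem_range] at hi
    exact pt_lr hp hk hm (by omega) (by omega)
  rw [hcalc, hsplit, Finset.prod_congr rfl hterms, hlrN]
  unfold Kc
  ring

theorem Rsmall {m : ℕ} (hm : m ≠ 0) (hpm : ¬ p ∣ m) :
    padicValNat p ((m * p ^ k)!) = padicValNat p ((m * p ^ k - p)!) + k := by
  haveI := Fact.mk hp
  set a := m * p ^ k with ha
  have hpa : p ≤ a := by
    calc p = p ^ 1 := (pow_one p).symm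
    _ ≤ p ^ k := Nat.pow_le_pow_right hp.pos hk
    _ ≤ a := Nat.le_mul_of_pos_left _ (by omega)
  have hterm_ne : ∀ i ∈ Finset.range p, a - i ≠ 0 := by
    intro i hi
    rw [Finset.mem_range] at hi
    omega
  have hfp := fact_prod (a := a) (b := p) hpa
  have hcalc : padicValNat p (a !) =
      padicValNat p ((a - p)!) + ∑ i ∈ Finset.range p, padicValNat p (a - i) := by
    rw [hfp, padicValNat.mul (Nat.factorial_ne_zero _)
      (Finset.prod_ne_zero_iff.2 hterm_ne), v_prod hp hk hterm_ne]
  have hsplit : ∑ i ∈ Finset.range p, padicValNat p (a - i) =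
      (∑ i ∈ Finset.range (p - 1), padicValNat p (a - (i + 1))) + padicValNat p a := by
    have hp1 : (p - 1) + 1 = p := by
      have := hp.pos
      omega
    calc ∑ i ∈ Finset.range p, padicValNat p (a - i)
        = ∑ i ∈ Finset.range ((p - 1) + 1), padicValNat p (a - i) := by rw [hp1]
      _ = (∑ i ∈ Finset.range (p - 1), padicValNat p (a - (i + 1))) + padicValNat p (a - 0) :=
          Finset.sum_range_succ' _ _
      _ = (∑ i ∈ Finset.range (p - 1), padicValNat p (a - (i + 1))) + padicValNat p a := by
          rw [Nat.sub_zero]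
  have hva : padicValNat p a = k := by
    rw [ha, padicValNat.mul hm (pow_pos hp.pos _).ne', padicValNat.prime_pow,
      padicValNat.eq_zero_of_not_dvd hpm, zero_add]
  have hterms : ∀ i ∈ Finset.range (p - 1), padicValNat p (a - (i + 1)) = 0 := by
    intro i hi
    rw [Finset.mem_range] at hi
    apply padicValNat.eq_zero_of_not_dvd
    intro hcon
    have hdpa : p ∣ a := by
      rw [ha]
      exact dvd_mul_of_dvd_right (dvd_pow_self p (by omega)) m
    have hthis : p ∣ a - (a - (i + 1)) := Nat.dvd_sub hdpa hcon
    rw [Nat.sub_sub_self (by omega : i + 1 ≤ a)] at hthis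
    have := Nat.le_of_dvd (by omega) hthis
    omega
  rw [hcalc, hsplit, Finset.sum_congr rfl hterms, hva]
  simp

end ratio

end Stmt12

open Nat Stmt12 in
theorem stmt_12 (p k u v : ℕ) (hp : p.Prime) (hk : 1 ≤ k) (hu : 1 ≤ u)
    (hv : 0 < v) (hdvd : Nat.lcm (Nat.lcm (p ^ (k - 1)) u) 2 ∣ v)
    (hdvd4 : p = 2 → k = 2 → 4 ∣ v) :
    ∀ x : (ZMod (p ^ k))ˣ, ∀ y : ZMod u, ∀ z : ZMod v,
      ∃ n : ℕ, (lastDigits p k (Nat.factorial n) : ZMod (p ^ k)) = (x : ZMod (p ^ k)) ∧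
        (padicValNat p (Nat.factorial n) : ZMod u) = y ∧ (n : ZMod v) = z := by
  intro x y z
  haveI hfact := Fact.mk hp
  haveI : NeZero v := ⟨hv.ne'⟩
  haveI : NeZero u := ⟨by omega⟩
  haveI : NeZero (p ^ k) := ⟨(pow_pos hp.pos k).ne'⟩
  haveI : Fact (1 < p ^ k) := ⟨by
    calc 1 < p := hp.one_lt
    _ = p ^ 1 := (pow_one p).symm
    _ ≤ p ^ k := Nat.pow_le_pow_right hp.pos hk⟩
  have hld : ∀ n : ℕ, ((lastDigits p k (n !) : ℕ) : ZMod (p ^ k)) = lr p k (n !) := by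
    intro n
    unfold lastDigits lr
    rw [ZMod.natCast_mod]
  -- the big constant L
  set Gcard := Fintype.card (ZMod (p ^ k))ˣ with hGcard
  have hGpos : 0 < Gcard := Fintype.card_pos
  set L := Gcard * (v * u * p) with hL
  have hvdvdL : v ∣ L := ⟨Gcard * (u * p), by rw [hL]; ring⟩
  have hudvdL : u ∣ L := ⟨Gcard * (v * p), by rw [hL]; ring⟩
  have hvL : (L : ZMod v) = 0 := (ZMod.natCast_eq_zero_iff L v).2 hvdvdL
  have huL : (L : ZMod u) = 0 := (ZMod.natCast_eq_zero_iff L u).2 hudvdL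
  have hpL : p ≤ L := by
    calc p ≤ v * u * p := Nat.le_mul_of_pos_left p (by positivity)
    _ ≤ L := Nat.le_mul_of_pos_left _ hGpos
  have h1L : 1 ≤ L := le_trans hp.one_lt.le hpL
  have hpowL : ∀ w : ZMod (p ^ k), IsUnit w → w ^ L = 1 := by
    intro w hw
    obtain ⟨w0, rfl⟩ := hw
    rw [← Units.val_pow_eq_pow_val, hL, pow_mul, pow_card_eq_one, one_pow, Units.val_one]
  -- pigeonhole on positions
  obtain ⟨c, hc⟩ := Finite.exists_infinite_fiber
    (fun i : ℕ => (((p ^ i : ℕ) : ZMod v), ((sig p i : ℕ) : ZMod u),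
      eps p k ^ sig p (i + 1 - k)))
  have hcinf := Set.infinite_coe_iff.mp hc
  obtain ⟨i0, hi0mem, hi0big⟩ := Set.Infinite.exists_gt hcinf k
  have hFi0 : (((p ^ i0 : ℕ) : ZMod v), ((sig p i0 : ℕ) : ZMod u),
      eps p k ^ sig p (i0 + 1 - k)) = c := hi0mem
  set π : ZMod v := c.1 with hπdef
  set σ' : ZMod u := c.2.1 with hσdef
  set η : ZMod (p ^ k) := c.2.2 with hηdef
  have hηval : eps p k ^ sig p (i0 + 1 - k) = η := by
    rw [hηdef, ← hFi0]
  have hηunit : IsUnit η := by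
    rw [← hηval]
    exact (W_unit hp hk _).pow _
  set e1 : ℕ → ZMod v := fun D => (D : ZMod v) * π with he1
  set e2 : ℕ → ZMod u := fun D => σ' * (D : ZMod u) + ((padicValNat p (D !) : ℕ) : ZMod u)
    with he2
  set e3 : ℕ → ZMod (p ^ k) := fun D => η ^ D * lr p k ((D * p ^ (k - 1))!) with he3
  have he3unit : ∀ D, IsUnit (e3 D) := fun D => (hηunit.pow D).mul (lr_fact_unit hp hk _)
  -- build
  have build : ∀ l : List ℕ, ∃ n : ℕ,
      ((n : ZMod v) = z + (l.map e1).sum) ∧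
      ((padicValNat p (n !) : ZMod u) = ((padicValNat p ((z.val)!) : ℕ) : ZMod u)
        + (l.map e2).sum) ∧
      (lr p k (n !) = lr p k ((z.val)!) * (l.map e3).prod) := by
    intro l
    induction l with
    | nil =>
      refine ⟨z.val, ?_, by simp, by simp⟩
      simp [ZMod.natCast_zmod_val]
    | cons D l ih =>
      obtain ⟨n, hn1, hn2, hn3⟩ := ih
      obtain ⟨i, himem, higt⟩ := Set.Infinite.exists_gt hcinf (n + k)
      have hFi : (((p ^ i : ℕ) : ZMod v), ((sig p i : ℕ) : ZMod u),
          eps p k ^ sig p (i + 1 - k)) = c := himem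
      have hπi : ((p ^ i : ℕ) : ZMod v) = π := by rw [hπdef, ← hFi]
      have hσi : ((sig p i : ℕ) : ZMod u) = σ' := by rw [hσdef, ← hFi]
      have hηi : eps p k ^ sig p (i + 1 - k) = η := by rw [hηdef, ← hFi]
      have hik : k ≤ i := by omega
      set j := i - (k - 1) with hj
      have hji : j + (k - 1) = i := by omega
      have hj1 : i + 1 - k = j := by omega
      have hnlt : n < p ^ j := by
        calc n < 2 ^ n := Nat.lt_two_pow_self
        _ ≤ 2 ^ j := Nat.pow_le_pow_right (by norm_num) (by omega)
        _ ≤ p ^ j := Nat.pow_le_pow_left hp.two_le _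
      have hnlti : n < p ^ i := lt_of_lt_of_le hnlt (Nat.pow_le_pow_right hp.pos (by omega))
      refine ⟨n + D * p ^ i, ?_, ?_, ?_⟩
      · simp only [List.map_cons, List.sum_cons]
        rw [Nat.cast_add, hn1, Nat.cast_mul, Nat.cast_pow, he1]
        have hππ : ((p : ZMod v)) ^ i = π := by
          rw [← hπi, Nat.cast_pow]
        rw [hππ]
        ring
      · simp only [List.map_cons, List.sum_cons]
        have hv' := v_insert hp i D n hnlti
        rw [hv', Nat.cast_add, Nat.cast_add, hn2, Nat.cast_mul, hσi, he2]
        ring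
      · simp only [List.map_cons, List.prod_cons]
        have hl' := lr_insert hp hk j D n hnlt
        rw [hji] at hl'
        rw [hl', hn3, he3, mul_comm D (sig p j), pow_mul, ← hj1, hηi]
        ring
  -- constants
  have h1pk : 1 < p ^ k := by
    calc 1 < p := hp.one_lt
    _ = p ^ 1 := (pow_one p).symm
    _ ≤ p ^ k := Nat.pow_le_pow_right hp.pos hk
  have hKunit : IsUnit (Kc p k) := by
    unfold Kc
    refine Finset.prod_induction _ IsUnit (fun a b => IsUnit.mul) isUnit_one ?_
    exact fun i _ => (lr_unit hp hk (Nat.succ_ne_zero i)).neg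
  set ν0 : ZMod u := ((padicValNat p ((z.val)!) : ℕ) : ZMod u) with hν0
  set ℓ0 : ZMod (p ^ k) := lr p k ((z.val)!) with hℓ0
  have hℓ0unit : IsUnit ℓ0 := lr_fact_unit hp hk _
  set t1 := (y - ν0).val with ht1
  have ht1cast : ((t1 : ℕ) : ZMod u) = y - ν0 := ZMod.natCast_zmod_val _
  set g1 : ZMod (p ^ k) := e3 p * e3 1 ^ (L - p) with hg1
  have hg1unit : IsUnit g1 := (he3unit p).mul ((he3unit 1).pow _)
  obtain ⟨T, hT⟩ := hℓ0unit.mul (hg1unit.pow t1)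
  set Mu := x * T⁻¹ with hMu
  set m := ((Mu : ZMod (p ^ k))).val with hmdef
  have hmcast : ((m : ℕ) : ZMod (p ^ k)) = (Mu : ZMod (p ^ k)) := ZMod.natCast_zmod_val _
  have hmcop : Nat.Coprime m (p ^ k) := ZMod.val_coe_unit_coprime Mu
  have hmne : m ≠ 0 := by
    intro h0
    rw [h0] at hmcop
    have h := (Nat.coprime_zero_left _).1 hmcop
    omega
  have hmnd : ¬ p ∣ m := by
    intro hdv
    have h := Nat.dvd_gcd hdv (dvd_pow_self p (by omega : k ≠ 0))
    rw [Nat.Coprime] at hmcop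
    rw [hmcop] at h
    have := Nat.le_of_dvd one_pos h
    have := hp.two_le
    omega
  set M := m * p ^ k with hMdef
  have hpPK : p ≤ p ^ k := by
    calc p = p ^ 1 := (pow_one p).symm
    _ ≤ p ^ k := Nat.pow_le_pow_right hp.pos hk
  have hpM : p ≤ M := by
    calc p ≤ p ^ k := hpPK
    _ ≤ M := by
        rw [hMdef]
        exact Nat.le_mul_of_pos_left _ (by omega)
  -- the final list of blocks
  set lfin : List ℕ := List.replicate t1 p ++ List.replicate (t1 * (L - p)) 1 ++
    [M] ++ List.replicate (L - 1) (M - p) ++ List.replicate (L - 1) (p ^ k) ++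
    List.replicate ((L - 1) * (L - 1)) (p ^ k - p) with hlfin
  obtain ⟨n, hn1, hn2, hn3⟩ := build lfin
  -- v-coordinate
  have hSv : (lfin.map e1).sum = 0 := by
    simp only [hlfin, List.map_append, List.sum_append, List.map_replicate, List.sum_replicate,
      List.map_cons, List.sum_cons, List.map_nil, List.sum_nil, nsmul_eq_mul, add_zero, he1]
    have c1 : ((L - p : ℕ) : ZMod v) = -(p : ZMod v) := by
      rw [Nat.cast_sub hpL, hvL, zero_sub]
    have c2 : ((L - 1 : ℕ) : ZMod v) = -1 := by
      rw [Nat.cast_sub h1L, hvL, zero_sub, Nat.cast_one]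
    have c3 : ((M - p : ℕ) : ZMod v) = ((M : ℕ) : ZMod v) - ((p : ℕ) : ZMod v) :=
      Nat.cast_sub hpM
    have c4 : ((p ^ k - p : ℕ) : ZMod v) = ((p ^ k : ℕ) : ZMod v) - ((p : ℕ) : ZMod v) :=
      Nat.cast_sub hpPK
    rw [Nat.cast_mul t1 (L - p), Nat.cast_mul (L - 1) (L - 1), c1, c2, c3, c4]
    push_cast
    ring
  -- u-coordinate
  have f1 : padicValNat p (p !) = 1 := v_fact_p hp
  have f3 : padicValNat p (M !) = padicValNat p ((M - p)!) + k := Rsmall hp hk hmne hmnd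
  have f4 : padicValNat p ((p ^ k)!) = padicValNat p ((p ^ k - p)!) + k := by
    have h := Rsmall hp hk (m := 1) one_ne_zero hp.not_dvd_one
    simpa using h
  have f2 : padicValNat p ((1 : ℕ)!) = 0 := by simp
  have hSu : (lfin.map e2).sum = ((t1 : ℕ) : ZMod u) := by
    simp only [hlfin, List.map_append, List.sum_append, List.map_replicate, List.sum_replicate,
      List.map_cons, List.sum_cons, List.map_nil, List.sum_nil, nsmul_eq_mul, add_zero, he2]
    have c1 : ((L - p : ℕ) : ZMod u) = -(p : ZMod u) := by
      rw [Nat.cast_sub hpL, huL, zero_sub]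
    have c2 : ((L - 1 : ℕ) : ZMod u) = -1 := by
      rw [Nat.cast_sub h1L, huL, zero_sub, Nat.cast_one]
    have c3 : ((M - p : ℕ) : ZMod u) = ((M : ℕ) : ZMod u) - ((p : ℕ) : ZMod u) :=
      Nat.cast_sub hpM
    have c4 : ((p ^ k - p : ℕ) : ZMod u) = ((p ^ k : ℕ) : ZMod u) - ((p : ℕ) : ZMod u) :=
      Nat.cast_sub hpPK
    rw [f1, f2, f3, f4, Nat.cast_mul t1 (L - p), Nat.cast_mul (L - 1) (L - 1), c1, c2, c3, c4]
    push_cast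
    ring
  -- multiplicative coordinate
  have hMe : M * p ^ (k - 1) = m * p ^ (2 * k - 1) := by
    rw [hMdef, mul_assoc, ← pow_add, show k + (k - 1) = 2 * k - 1 from by omega]
  have hMp : (M - p) * p ^ (k - 1) = m * p ^ (2 * k - 1) - p ^ k := by
    rw [Nat.sub_mul, hMe, show p * p ^ (k - 1) = p ^ k from by
      rw [← _root_.pow_succ', show k - 1 + 1 = k from by omega]]
  have hab : e3 M = (m : ZMod (p ^ k)) * ((Kc p k * η ^ p) * e3 (M - p)) := by
    have hsplit : η ^ M = η ^ (M - p) * η ^ p := by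
      rw [← pow_add]
      congr 1
      omega
    simp only [he3]
    rw [hMe, R1 hp hk hmne hmnd, ← hMp, hsplit]
    ring
  have hce : e3 (p ^ k) = (Kc p k * η ^ p) * e3 (p ^ k - p) := by
    have h1e : (p ^ k) * p ^ (k - 1) = 1 * p ^ (2 * k - 1) := by
      rw [one_mul, ← pow_add, show k + (k - 1) = 2 * k - 1 from by omega]
    have h2e : (p ^ k - p) * p ^ (k - 1) = 1 * p ^ (2 * k - 1) - p ^ k := by
      rw [Nat.sub_mul, h1e, show p * p ^ (k - 1) = p ^ k from by
        rw [← _root_.pow_succ', show k - 1 + 1 = k from by omega]]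
    have hsplit : η ^ (p ^ k) = η ^ (p ^ k - p) * η ^ p := by
      rw [← pow_add]
      congr 1
      omega
    simp only [he3]
    rw [h1e, R1 hp hk one_ne_zero hp.not_dvd_one, ← h2e, hsplit, Nat.cast_one]
    ring
  have hprod : (lfin.map e3).prod =
      e3 p ^ t1 * e3 1 ^ (t1 * (L - p)) * e3 M * e3 (M - p) ^ (L - 1) * e3 (p ^ k) ^ (L - 1)
        * e3 (p ^ k - p) ^ ((L - 1) * (L - 1)) := by
    simp only [hlfin, List.map_append, List.prod_append, List.map_replicate,
      List.prod_replicate, List.map_cons, List.prod_cons, List.map_nil, List.prod_nil, mul_one]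
  have hkey : (lfin.map e3).prod = (Mu : ZMod (p ^ k)) * g1 ^ t1 := by
    obtain ⟨l0, hl0⟩ : ∃ l0, L = l0 + 1 := ⟨L - 1, by omega⟩
    have hLm1 : L - 1 = l0 := by omega
    have hKE : (Kc p k * η ^ p) ^ L = 1 := hpowL _ (hKunit.mul (hηunit.pow p))
    have hbL : e3 (M - p) ^ L = 1 := hpowL _ (he3unit _)
    have heL : e3 (p ^ k - p) ^ L = 1 := hpowL _ (he3unit _)
    rw [hprod, hab, hce, hLm1, mul_pow]
    trans ((m : ZMod (p ^ k)) * ((Kc p k * η ^ p) ^ (1 + l0) * (e3 (M - p) ^ (1 + l0) *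
      e3 (p ^ k - p) ^ (l0 + l0 * l0))) * (e3 p ^ t1 * e3 1 ^ (t1 * (L - p))))
    · ring
    · rw [show 1 + l0 = L from by omega,
        show l0 + l0 * l0 = L * l0 from by rw [hl0]; ring,
        pow_mul (e3 (p ^ k - p)) L l0, hKE, hbL, heL, one_pow, hmcast, hg1,
        mul_pow (e3 p) (e3 1 ^ (L - p)) t1, ← pow_mul (e3 1) (L - p) t1,
        mul_comm (L - p) t1]
      ring
  refine ⟨n, ?_, ?_, ?_⟩
  · rw [hld n, hn3, hkey]
    calc ℓ0 * ((Mu : ZMod (p ^ k)) * g1 ^ t1) = (ℓ0 * g1 ^ t1) * (Mu : ZMod (p ^ k)) := by ring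
    _ = (T : ZMod (p ^ k)) * (Mu : ZMod (p ^ k)) := by rw [hT]
    _ = ((T * Mu : (ZMod (p ^ k))ˣ) : ZMod (p ^ k)) := (Units.val_mul _ _).symm
    _ = (x : ZMod (p ^ k)) := by
        rw [hMu, mul_comm x T⁻¹, mul_inv_cancel_left]
  · rw [hn2, hSu, ht1cast]
    ring
  · rw [hn1, hSv, add_zero]
end

section
/- Define β : ℕ → ℤ/720ℤ by β(0) = 576 and β(5n + j) = β(n) · j! for all n ≥ 0 and j ∈ {0,1,2,3,4} (multiplication and factorial taken modulo 720). Then β takes only the values {144, 288, 432, 576}, and the set {n : β(n) = a} has asymptotic density 1/4 for each a ∈ {144, 288, 432, 576}. -/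
def hasDensity (A : ℕ → Prop) (d : ℝ) : Prop :=
  Filter.Tendsto (fun N => (Nat.card {n : ℕ // n < N ∧ A n} : ℝ) / N)
    Filter.atTop (nhds d)

open Finset Filter

/-! ### Auxiliary definitions -/

/-- Discrete logarithm on the four relevant residues. -/
def psi720 : ZMod 720 → ZMod 4 := fun x =>
  if x = 144 then 0 else if x = 288 then 1 else if x = 576 then 2 else 3

/-- Exponent contributed by base-5 digit `j`. -/
def eDigit : ℕ → ZMod 4 := fun j => if j = 2 then 1 else if j = 4 then 2 else 0

/-- The character `w ↦ i^w` on `ZMod 4`. -/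
noncomputable def omega4 : ZMod 4 → ℂ := fun w => Complex.I ^ w.val

lemma I_pow_mod (k : ℕ) : Complex.I ^ (k % 4) = Complex.I ^ k := by
  conv_rhs => rw [← Nat.div_add_mod k 4]
  rw [pow_add, pow_mul, Complex.I_pow_four, one_pow, one_mul]

lemma omega4_add (x y : ZMod 4) : omega4 (x + y) = omega4 x * omega4 y := by
  unfold omega4
  rw [← pow_add, ZMod.val_add, I_pow_mod]

lemma omega4_norm (w : ZMod 4) : ‖omega4 w‖ = 1 := by
  simp [omega4]

lemma omega4_pow4 (w : ZMod 4) : (omega4 w) ^ 4 = 1 := by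
  unfold omega4
  rw [← pow_mul, mul_comm, pow_mul, Complex.I_pow_four, one_pow]

lemma omega4_eq_one_iff (w : ZMod 4) : omega4 w = 1 ↔ w = 0 := by
  unfold omega4
  have hv : w.val < 4 := w.val_lt
  constructor
  · intro h
    have : w.val = 0 := by
      by_contra hne
      interval_cases k : w.val <;>
        simp [pow_succ, Complex.ext_iff, Complex.I_sq] at h hne <;> norm_num at h
    exact (ZMod.val_eq_zero w).mp this
  · intro h; subst h; simp

lemma omega4_zero : omega4 0 = 1 := by simp [omega4]

lemma omega4_one : omega4 1 = Complex.I := by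
  have : (1 : ZMod 4).val = 1 := rfl
  simp [omega4, this]

lemma omega4_two : omega4 2 = -1 := by
  have : (2 : ZMod 4).val = 2 := rfl
  simp [omega4, this, Complex.I_sq]

lemma sum_pow4 (z : ℂ) (hz : z ^ 4 = 1) :
    ∑ t ∈ Finset.range 4, z ^ t = if z = 1 then 4 else 0 := by
  by_cases h : z = 1
  · simp [h]
  · rw [geom_sum_eq h, hz]
    simp [h]

lemma key720 (b : ZMod 720) (hb : b = 144 ∨ b = 288 ∨ b = 432 ∨ b = 576)
    (j : ℕ) (hj : j ≤ 4) :
    (b * (Nat.factorial j : ZMod 720) = 144 ∨ b * (Nat.factorial j : ZMod 720) = 288 ∨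
      b * (Nat.factorial j : ZMod 720) = 432 ∨ b * (Nat.factorial j : ZMod 720) = 576) ∧
    psi720 (b * (Nat.factorial j : ZMod 720)) = psi720 b + eDigit j := by
  interval_cases j <;> rcases hb with rfl | rfl | rfl | rfl <;>
    simp only [Nat.factorial] <;> decide

lemma psi720_inj (a b : ZMod 720) (ha : a = 144 ∨ a = 288 ∨ a = 432 ∨ a = 576)
    (hb : b = 144 ∨ b = 288 ∨ b = 432 ∨ b = 576) (h : psi720 a = psi720 b) : a = b := by
  rcases ha with rfl|rfl|rfl|rfl <;> rcases hb with rfl|rfl|rfl|rfl <;> revert h <;> decide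

/-! ### Exponential sum bounds -/

lemma sum_block (f : ℕ → ℂ) (c : ℂ)
    (hrec : ∀ Q, ∑ j ∈ Finset.range 5, f (5 * Q + j) = c * f Q) (Q : ℕ) :
    ∑ n ∈ Finset.range (5 * Q), f n = c * ∑ q ∈ Finset.range Q, f q := by
  induction Q with
  | zero => simp
  | succ Q ih =>
    rw [show 5 * (Q + 1) = 5 * Q + 5 by ring, Finset.sum_range_add, ih, hrec Q,
      Finset.sum_range_succ, mul_add]

lemma sum_bound (f : ℕ → ℂ) (c : ℂ) (hnorm : ∀ n, ‖f n‖ ≤ 1) (hc : ‖c‖ ≤ 3)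
    (hrec : ∀ Q, ∑ j ∈ Finset.range 5, f (5 * Q + j) = c * f Q) :
    ∀ m : ℕ, ∀ N < 5 ^ m, ‖∑ n ∈ Finset.range N, f n‖ ≤ 3 ^ (m + 1) - 5 / 2 := by
  intro m
  induction m with
  | zero =>
    intro N hN
    interval_cases N
    simp; norm_num
  | succ m ih =>
    intro N hN
    have hQ : N / 5 < 5 ^ m := by
      rw [Nat.div_lt_iff_lt_mul (by norm_num)]
      calc N < 5 ^ (m + 1) := hN
        _ = 5 ^ m * 5 := by ring
    have hr : N % 5 ≤ 4 := by omega
    have hN5 : N = 5 * (N / 5) + N % 5 := (Nat.div_add_mod N 5).symm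
    rw [hN5, Finset.sum_range_add, sum_block f c hrec]
    have htail : ‖∑ j ∈ Finset.range (N % 5), f (5 * (N / 5) + j)‖ ≤ 4 := by
      calc ‖∑ j ∈ Finset.range (N % 5), f (5 * (N / 5) + j)‖
          ≤ ∑ j ∈ Finset.range (N % 5), ‖f (5 * (N / 5) + j)‖ := norm_sum_le _ _
        _ ≤ ∑ _j ∈ Finset.range (N % 5), 1 := Finset.sum_le_sum fun j _ => hnorm _
        _ ≤ 4 := by
            rw [Finset.sum_const, Finset.card_range, nsmul_eq_mul, mul_one]
            exact_mod_cast hr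
    calc ‖c * ∑ q ∈ Finset.range (N / 5), f q + ∑ j ∈ Finset.range (N % 5), f (5 * (N / 5) + j)‖
        ≤ ‖c‖ * ‖∑ q ∈ Finset.range (N / 5), f q‖ + 4 := by
          refine (norm_add_le _ _).trans ?_
          rw [norm_mul]
          exact add_le_add le_rfl htail
      _ ≤ 3 * (3 ^ (m + 1) - 5 / 2) + 4 := by
          refine add_le_add_left ?_ 4
          exact mul_le_mul hc (ih _ hQ) (norm_nonneg _) (by norm_num)
      _ ≤ 3 ^ (m + 1 + 1) - 5 / 2 := by ring_nf; nlinarith [pow_pos (by norm_num : (0:ℝ) < 3) m]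

lemma natlog_tendsto : Tendsto (fun N => Nat.log 5 N) atTop atTop := by
  apply tendsto_atTop_atTop.mpr
  intro b
  refine ⟨5 ^ b, fun a ha => ?_⟩
  have hp : 0 < 5 ^ b := Nat.pow_pos (by norm_num)
  have ha0 : a ≠ 0 := by omega
  exact (Nat.le_log_iff_pow_le (by norm_num) ha0).mpr ha

lemma tendsto_of_bound (T : ℕ → ℂ)
    (hbd : ∀ m : ℕ, ∀ N < 5 ^ m, ‖T N‖ ≤ 3 ^ (m + 1)) :
    Tendsto (fun N => T N / N) atTop (nhds 0) := by
  rw [tendsto_zero_iff_norm_tendsto_zero]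
  have hmaj : Tendsto (fun N : ℕ => 9 * ((3 : ℝ) / 5) ^ (Nat.log 5 N)) atTop (nhds 0) := by
    have h1 : Tendsto (fun m : ℕ => ((3 : ℝ) / 5) ^ m) atTop (nhds 0) :=
      tendsto_pow_atTop_nhds_zero_of_lt_one (by norm_num) (by norm_num)
    have := (h1.comp natlog_tendsto).const_mul (9 : ℝ)
    simpa using this
  apply squeeze_zero' (Eventually.of_forall fun N => norm_nonneg _) _ hmaj
  filter_upwards [eventually_ge_atTop 1] with N hN
  have hN0 : N ≠ 0 := by omega
  set m := Nat.log 5 N with hm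
  have hlow : (5 : ℕ) ^ m ≤ N := Nat.pow_log_le_self 5 hN0
  have hhi : N < 5 ^ (m + 1) := Nat.lt_pow_succ_log_self (by norm_num) N
  have hTb : ‖T N‖ ≤ 3 ^ (m + 1 + 1) := hbd (m + 1) N hhi
  have hNpos : (0 : ℝ) < N := by positivity
  rw [norm_div, Complex.norm_natCast]
  rw [div_le_iff₀ hNpos]
  calc ‖T N‖ ≤ 3 ^ (m + 2) := hTb
    _ = 9 * 3 ^ m := by ring
    _ ≤ 9 * ((3 / 5) ^ m * N) := by
        have : (5 : ℝ) ^ m ≤ N := by exact_mod_cast hlow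
        have h35 : ((3 : ℝ) / 5) ^ m * 5 ^ m = 3 ^ m := by
          rw [← mul_pow]; norm_num
        nlinarith [pow_pos (by norm_num : (0:ℝ) < 3/5) m, pow_pos (by norm_num : (0:ℝ) < 5) m]
    _ = 9 * (3 / 5) ^ m * N := by ring

theorem stmt_17 (β : ℕ → ZMod 720) (h0 : β 0 = 576)
    (hrec : ∀ n : ℕ, ∀ j : ℕ, j ≤ 4 → β (5 * n + j) = β n * (Nat.factorial j : ZMod 720)) :
    (∀ n, β n ∈ ({144, 288, 432, 576} : Set (ZMod 720))) ∧
      ∀ a ∈ ({144, 288, 432, 576} : Set (ZMod 720)),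
        hasDensity (fun n => β n = a) (1 / 4) := by
  classical
  -- membership
  have hS : ∀ n, β n = 144 ∨ β n = 288 ∨ β n = 432 ∨ β n = 576 := by
    intro n
    induction n using Nat.strong_induction_on with
    | _ n ih =>
      rcases Nat.eq_zero_or_pos n with h | h
      · subst h; rw [h0]; tauto
      · have h5 : n % 5 ≤ 4 := by omega
        have hn : 5 * (n / 5) + n % 5 = n := Nat.div_add_mod n 5
        have hdiv : n / 5 < n := Nat.div_lt_self h (by norm_num)
        have := hrec (n / 5) (n % 5) h5
        rw [hn] at this
        rw [this]
        exact (key720 (β (n / 5)) (ih _ hdiv) (n % 5) h5).1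
  have hmem : ∀ n, β n ∈ ({144, 288, 432, 576} : Set (ZMod 720)) := by
    intro n
    simp only [Set.mem_insert_iff, Set.mem_singleton_iff]
    exact hS n
  refine ⟨hmem, ?_⟩
  intro a ha
  have haS : a = 144 ∨ a = 288 ∨ a = 432 ∨ a = 576 := by
    simpa only [Set.mem_insert_iff, Set.mem_singleton_iff] using ha
  -- digit recursion for psi
  have hφ : ∀ n j, j ≤ 4 → psi720 (β (5 * n + j)) = psi720 (β n) + eDigit j := by
    intro n j hj
    rw [hrec n j hj]
    exact (key720 (β n) (hS n) j hj).2
  -- the exponential sums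
  set u : ZMod 4 := psi720 a with hu
  set z : ℂ := omega4 (-u) with hz
  set T : ℕ → ℕ → ℂ := fun t N => ∑ n ∈ Finset.range N, omega4 (psi720 (β n)) ^ t with hT
  have hfnorm : ∀ t n : ℕ, ‖omega4 (psi720 (β n)) ^ t‖ ≤ 1 := by
    intro t n
    rw [norm_pow, omega4_norm, one_pow]
  have hfrec : ∀ t Q : ℕ, ∑ j ∈ Finset.range 5, omega4 (psi720 (β (5 * Q + j))) ^ t =
      (∑ j ∈ Finset.range 5, omega4 (eDigit j) ^ t) * omega4 (psi720 (β Q)) ^ t := by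
    intro t Q
    rw [Finset.sum_mul]
    refine Finset.sum_congr rfl fun j hj => ?_
    have hj4 : j ≤ 4 := by
      have := Finset.mem_range.mp hj; omega
    rw [hφ Q j hj4, omega4_add, mul_pow, mul_comm]
  -- the constants c_t for t = 1, 2, 3
  have hc_unroll : ∀ t : ℕ, (∑ j ∈ Finset.range 5, omega4 (eDigit j) ^ t) =
      3 + Complex.I ^ t + (-1 : ℂ) ^ t := by
    intro t
    have e0 : eDigit 0 = 0 := rfl
    have e1 : eDigit 1 = 0 := rfl
    have e2 : eDigit 2 = 1 := rfl
    have e3 : eDigit 3 = 0 := rfl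
    have e4 : eDigit 4 = 2 := rfl
    rw [show (5 : ℕ) = 4 + 1 by rfl, Finset.sum_range_succ, Finset.sum_range_succ,
      Finset.sum_range_succ, Finset.sum_range_succ, Finset.sum_range_succ,
      Finset.sum_range_zero, e0, e1, e2, e3, e4, omega4_zero, omega4_one, omega4_two]
    ring
  have hcnorm : ∀ t ∈ ({1, 2, 3} : Finset ℕ),
      ‖(∑ j ∈ Finset.range 5, omega4 (eDigit j) ^ t)‖ ≤ 3 := by
    intro t ht
    rw [hc_unroll t]
    fin_cases ht
    · have : (3 : ℂ) + Complex.I ^ 1 + (-1 : ℂ) ^ 1 = 2 + Complex.I := by ring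
      rw [this]
      calc ‖(2 : ℂ) + Complex.I‖ ≤ ‖(2 : ℂ)‖ + ‖Complex.I‖ := norm_add_le _ _
        _ = 3 := by rw [Complex.norm_I]; norm_num
    · have : (3 : ℂ) + Complex.I ^ 2 + (-1 : ℂ) ^ 2 = 3 := by
        rw [Complex.I_sq]; ring
      rw [this]; norm_num
    · have : (3 : ℂ) + Complex.I ^ 3 + (-1 : ℂ) ^ 3 = 2 + (- Complex.I) := by
        rw [pow_succ, Complex.I_sq]; ring
      rw [this]
      calc ‖(2 : ℂ) + (- Complex.I)‖ ≤ ‖(2 : ℂ)‖ + ‖- Complex.I‖ := norm_add_le _ _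
        _ = 3 := by rw [norm_neg, Complex.norm_I]; norm_num
  -- tendsto of the nontrivial exponential sums
  have hTtend : ∀ t ∈ ({1, 2, 3} : Finset ℕ),
      Tendsto (fun N => T t N / N) atTop (nhds 0) := by
    intro t ht
    apply tendsto_of_bound
    intro m N hN
    have := sum_bound (fun n => omega4 (psi720 (β n)) ^ t)
      (∑ j ∈ Finset.range 5, omega4 (eDigit j) ^ t) (hfnorm t) (hcnorm t ht)
      (hfrec t) m N hN
    calc ‖T t N‖ ≤ 3 ^ (m + 1) - 5 / 2 := this
      _ ≤ 3 ^ (m + 1) := by norm_num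
  -- counting function
  set C : ℕ → ℕ := fun N => ((Finset.range N).filter fun n => β n = a).card with hC
  have hcard : ∀ N, (Nat.card {n : ℕ // n < N ∧ β n = a}) = C N := by
    intro N
    have hset : {n : ℕ | n < N ∧ β n = a} =
        ↑((Finset.range N).filter fun n => β n = a) := by
      ext n; simp
    calc Nat.card {n : ℕ // n < N ∧ β n = a}
        = Nat.card {n : ℕ | n < N ∧ β n = a} := rfl
      _ = ({n : ℕ | n < N ∧ β n = a} : Set ℕ).ncard := Nat.card_coe_set_eq _
      _ = C N := by rw [hset, Set.ncard_coe_finset]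
  -- the key identity
  have hkey : ∀ N : ℕ, (4 : ℂ) * (C N : ℂ) =
      (N : ℂ) + z * T 1 N + z ^ 2 * T 2 N + z ^ 3 * T 3 N := by
    intro N
    have hCN : (C N : ℂ) = ∑ n ∈ Finset.range N, (if β n = a then (1 : ℂ) else 0) := by
      rw [hC]
      simp only [Finset.card_filter]
      push_cast [apply_ite (Nat.cast : ℕ → ℂ)]
      rfl
    have hpoint : ∀ n : ℕ, (4 : ℂ) * (if β n = a then (1 : ℂ) else 0) =
        ∑ t ∈ Finset.range 4, omega4 (psi720 (β n) + -u) ^ t := by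
      intro n
      rw [sum_pow4 _ (omega4_pow4 _)]
      have hiff : omega4 (psi720 (β n) + -u) = 1 ↔ β n = a := by
        rw [omega4_eq_one_iff]
        constructor
        · intro h
          apply psi720_inj _ _ (hS n) haS
          have : psi720 (β n) = u := by
            have := h
            rw [add_neg_eq_zero] at this
            exact this
          rw [this, hu]
        · intro h
          rw [h, hu, add_neg_cancel]
      by_cases hba : β n = a
      · rw [if_pos hba, if_pos (hiff.mpr hba)]; ring
      · rw [if_neg hba, if_neg (fun h => hba (hiff.mp h))]; ring
    calc (4 : ℂ) * (C N : ℂ)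
        = ∑ n ∈ Finset.range N, (4 : ℂ) * (if β n = a then (1 : ℂ) else 0) := by
          rw [hCN, Finset.mul_sum]
      _ = ∑ n ∈ Finset.range N, ∑ t ∈ Finset.range 4, omega4 (psi720 (β n) + -u) ^ t := by
          exact Finset.sum_congr rfl fun n _ => hpoint n
      _ = ∑ t ∈ Finset.range 4, ∑ n ∈ Finset.range N, omega4 (psi720 (β n) + -u) ^ t :=
          Finset.sum_comm
      _ = ∑ t ∈ Finset.range 4, z ^ t * T t N := by
          refine Finset.sum_congr rfl fun t _ => ?_
          rw [hT, Finset.mul_sum]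
          refine Finset.sum_congr rfl fun n _ => ?_
          rw [omega4_add, mul_pow, hz, mul_comm]
      _ = (N : ℂ) + z * T 1 N + z ^ 2 * T 2 N + z ^ 3 * T 3 N := by
          rw [show (4 : ℕ) = 3 + 1 by rfl, Finset.sum_range_succ, Finset.sum_range_succ,
            Finset.sum_range_succ, Finset.sum_range_succ, Finset.sum_range_zero]
          have hT0 : T 0 N = (N : ℂ) := by
            rw [hT]; simp
          rw [hT0]
          ring
  -- complex convergence
  have hgC : Tendsto (fun N : ℕ => (C N : ℂ) / N) atTop (nhds (1 / 4 : ℂ)) := by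
    have hlim : Tendsto (fun N : ℕ =>
        (1 / 4 : ℂ) + (z * (T 1 N / N) + z ^ 2 * (T 2 N / N) + z ^ 3 * (T 3 N / N)) / 4)
        atTop (nhds (1 / 4 : ℂ)) := by
      have h1 := hTtend 1 (by decide)
      have h2 := hTtend 2 (by decide)
      have h3 := hTtend 3 (by decide)
      have := ((((h1.const_mul z).add (h2.const_mul (z ^ 2))).add
        (h3.const_mul (z ^ 3))).div_const (4 : ℂ)).const_add (1 / 4 : ℂ)
      simpa using this
    apply hlim.congr'
    filter_upwards [eventually_ge_atTop 1] with N hN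
    have hN0 : (N : ℂ) ≠ 0 := by
      simp only [ne_eq, Nat.cast_eq_zero]; omega
    have hCval : (C N : ℂ) = ((N : ℂ) + z * T 1 N + z ^ 2 * T 2 N + z ^ 3 * T 3 N) / 4 := by
      linear_combination (hkey N) / 4
    rw [hCval]
    field_simp
    ring
  -- real convergence
  unfold hasDensity
  have hre := (Complex.continuous_re.tendsto _).comp hgC
  have heq : (fun N : ℕ => ((C N : ℂ) / N).re) =
      fun N : ℕ => (Nat.card {n : ℕ // n < N ∧ β n = a} : ℝ) / N := by
    funext N
    rw [hcard N]
    rw [show ((C N : ℂ) / (N : ℂ)) = (((C N : ℝ) / (N : ℝ) : ℝ) : ℂ) by push_cast; ring]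
    rw [Complex.ofReal_re]
  rw [← heq]
  convert hre using 2
  simp [Complex.div_re]
  all_goals (rw [show (1/4:ℂ) = ((1/4:ℝ):ℂ) by push_cast; ring]; exact (Complex.ofReal_re _).symm)
end

section
/- Let p be a prime, k ≥ 1, and m a positive integer. Then ℓ_{p^{l},k}(m) ≡ ℓ_{p, l·k}(m) · p^{ν_p(m) mod l} (mod p^{l·k}) for any l ≥ 1. -/
theorem stmt_18 (p k l m : ℕ) (hp : p.Prime) (hk : 1 ≤ k) (hl : 1 ≤ l)
    (hm : 0 < m) :
    lastDigits (p ^ l) k m ≡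
      lastDigits p (l * k) m * p ^ (padicValNat p m % l) [MOD p ^ (l * k)] := by
  haveI : Fact p.Prime := ⟨hp⟩
  set v := padicValNat p m with hv
  have hl0 : 0 < l := hl
  have hq1 : p ^ l ≠ 1 := by
    have := hp.one_lt
    exact Nat.ne_of_gt (one_lt_pow₀ (by omega) (by omega))
  -- valuation of m at p^l is v / l
  have hval : padicValNat (p ^ l) m = v / l := by
    rw [padicValNat_def' hq1 hm.ne']
    apply multiplicity_eq_of_dvd_of_not_dvd
    · rw [← pow_mul]
      exact dvd_trans (pow_dvd_pow p (Nat.mul_div_le v l)) pow_padicValNat_dvd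
    · rw [← pow_mul]
      intro hdvd
      have h1 : v + 1 ≤ l * (v / l + 1) := by
        have h2 := Nat.div_add_mod v l
        have h3 := Nat.mod_lt v hl0
        nlinarith [Nat.mul_div_le v l]
      exact pow_succ_padicValNat_not_dvd hm.ne'
        (dvd_trans (pow_dvd_pow p h1) hdvd)
  have hdvd : p ^ v ∣ m := pow_padicValNat_dvd
  obtain ⟨n, hn⟩ := hdvd
  have hp0 : 0 < p := hp.pos
  have hmdiv : m / p ^ v = n := by
    rw [hn, Nat.mul_div_cancel_left _ (Nat.pow_pos hp0)]
  have hsplit : p ^ v = p ^ (l * (v / l)) * p ^ (v % l) := by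
    rw [← pow_add]
    congr 1
    exact (Nat.div_add_mod v l).symm
  have hkey : m / (p ^ l) ^ (v / l) = p ^ (v % l) * n := by
    rw [← pow_mul, hn, hsplit, mul_assoc,
      Nat.mul_div_cancel_left _ (Nat.pow_pos hp0)]
  unfold lastDigits
  rw [hval, ← hv, hkey, hmdiv, ← pow_mul]
  calc (p ^ (v % l) * n) % p ^ (l * k)
      ≡ p ^ (v % l) * n [MOD p ^ (l * k)] := Nat.mod_modEq _ _
    _ = n * p ^ (v % l) := mul_comm _ _
    _ ≡ n % p ^ (l * k) * p ^ (v % l) [MOD p ^ (l * k)] :=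
        ((Nat.mod_modEq n _).symm).mul_right _
end
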